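/- arXiv:2603.21949 — 2 statements merged into one kernel-verified Lean document; each statement's English description precedes it below -/
import Mathlib

section
/- For the RKNL machine, the β-transition increases potential by less than the potential of the source term: if k is reachable from an initial term t₀ and k steps to k' by transition (6), then Φ(k) + Φt(t₀) > Φ(k'). -/
set_option autoImplicit false
set_option maxHeartbeats 1000000

namespace RKNL

/- Pure lambda terms over a type of variables. -/
inductive Tm (V : Type) : Type
  | var : V → Tm V
  | app : Tm V → Tm V → Tm V
  | lam : V → Tm V → Tm V
  deriving DecidableEq

abbrev Ident : Type := ℕ
abbrev Loc : Type := ℕ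

/-- Lookup in an association list (first match). -/
def lookupL {β : Type} : List (ℕ × β) → ℕ → Option β
  | [], _ => none
  | (a, b) :: l, x => if x = a then some b else lookupL l x

/-- Update of an association list. -/
def updL {β : Type} (l : List (ℕ × β)) (x : ℕ) (b : β) : List (ℕ × β) :=
  l.map fun p => if p.1 = x then (x, b) else p

/-- Environments map identifiers to store locations. -/
abbrev Env : Type := List (Ident × Loc)

/-- Closures pair a term with an environment. -/
abbrev Closure : Type := Tm Ident × Env

/-- Values: terms (normal forms), or abstraction closures annotated with a location. -/
inductive Value : Type
  | tm : Tm Ident → Value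
  | abs : Ident → Tm Ident → Env → Loc → Value
  deriving DecidableEq

/-- Storable values (memothunks):
`pend x t e` is the `todo ⊥` placeholder allocated for the abstraction `(λx.t, e)`,
`todo c` an unevaluated argument thunk, `done v` a memoized value. -/
inductive Storable : Type
  | pend : Ident → Tm Ident → Env → Storable
  | todo : Closure → Storable
  | done : Value → Storable
  deriving DecidableEq

/-- Stores map locations to storable values. -/
abbrev Store : Type := List (Loc × Storable)

/-- Stack frames: `arg c` is `(□ c)`, `appL t` is `(t □)`, `lamF x` is `λx.□`,
`cache ℓ` is `ℓ := □`. -/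
inductive Frame : Type
  | arg : Closure → Frame
  | appL : Tm Ident → Frame
  | lamF : Ident → Frame
  | cache : Loc → Frame
  deriving DecidableEq

abbrev Stack : Type := List Frame

/-- Machine configurations: evaluation mode `⟨c, s, σ⟩▸` and continue mode `⟨σ, v, s⟩◂`. -/
inductive Conf : Type
  | eval : Closure → Stack → Store → Conf
  | cont : Store → Value → Stack → Conf

/-- The initial configuration loading a term. -/
def Conf.init (t : Tm Ident) : Conf := .eval (t, []) [] []

def Conf.store : Conf → Store
  | .eval _ _ σ => σ
  | .cont σ _ _ => σ

def Conf.stack : Conf → Stack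
  | .eval _ s _ => s
  | .cont _ _ s => s

/- Identifiers occurring in a configuration (used for freshness of generated names). -/
def tmVars : Tm Ident → List Ident
  | .var x => [x]
  | .app a b => tmVars a ++ tmVars b
  | .lam x t => x :: tmVars t

def envVars (e : Env) : List Ident := e.map Prod.fst

def valVars : Value → List Ident
  | .tm t => tmVars t
  | .abs x t e _ => x :: (tmVars t ++ envVars e)

def storableVars : Storable → List Ident
  | .pend x t e => x :: (tmVars t ++ envVars e)
  | .todo c => tmVars c.1 ++ envVars c.2
  | .done v => valVars v

def frameVars : Frame → List Ident
  | .arg c => tmVars c.1 ++ envVars c.2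
  | .appL t => tmVars t
  | .lamF x => [x]
  | .cache _ => []

def stackVars (s : Stack) : List Ident := s.foldr (fun f acc => frameVars f ++ acc) []

def storeVars (σ : Store) : List Ident := σ.foldr (fun p acc => storableVars p.2 ++ acc) []

def confVars : Conf → List Ident
  | .eval c s σ => tmVars c.1 ++ envVars c.2 ++ stackVars s ++ storeVars σ
  | .cont σ v s => valVars v ++ stackVars s ++ storeVars σ

/-- The top of the stack is not an argument frame. -/
def Stack.noArgTop : Stack → Prop
  | Frame.arg _ :: _ => False
  | _ => True

/-- The top of the stack is not a memoization frame. -/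
def Stack.noCacheTop : Stack → Prop
  | Frame.cache _ :: _ => False
  | _ => True

/-- The eleven transitions of the RKNL abstract machine, indexed by rule number. -/
inductive Step : ℕ → Conf → Conf → Prop
  | r1 {t1 t2 : Tm Ident} {e : Env} {s : Stack} {σ : Store} :
      Step 1 (.eval (.app t1 t2, e) s σ) (.eval (t1, e) (.arg (t2, e) :: s) σ)
  | r2 {x : Ident} {t : Tm Ident} {e : Env} {s : Stack} {σ : Store} {ℓ : Loc}
      (h : lookupL σ ℓ = none) :
      Step 2 (.eval (.lam x t, e) s σ) (.cont ((ℓ, .pend x t e) :: σ) (.abs x t e ℓ) s)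
  | r3 {x : Ident} {e e2 : Env} {s : Stack} {σ : Store} {ℓ : Loc} {t : Tm Ident}
      (he : lookupL e x = some ℓ) (hσ : lookupL σ ℓ = some (.todo (t, e2))) :
      Step 3 (.eval (.var x, e) s σ) (.eval (t, e2) (.cache ℓ :: s) σ)
  | r4done {x : Ident} {e : Env} {s : Stack} {σ : Store} {ℓ : Loc} {v : Value}
      (he : lookupL e x = some ℓ) (hσ : lookupL σ ℓ = some (.done v)) :
      Step 4 (.eval (.var x, e) s σ) (.cont σ v s)
  | r4free {x : Ident} {e : Env} {s : Stack} {σ : Store}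
      (he : lookupL e x = none) :
      Step 4 (.eval (.var x, e) s σ) (.cont σ (.tm (.var x)) s)
  | r5 {σ : Store} {v : Value} {ℓ : Loc} {s : Stack} :
      Step 5 (.cont σ v (.cache ℓ :: s)) (.cont (updL σ ℓ (.done v)) v s)
  | r6 {σ : Store} {x : Ident} {t t2 : Tm Ident} {e e2 : Env} {ℓ ℓ2 : Loc} {s : Stack}
      (h : lookupL σ ℓ2 = none) :
      Step 6 (.cont σ (.abs x t e ℓ) (.arg (t2, e2) :: s))
             (.eval (t, (x, ℓ2) :: e) s ((ℓ2, .todo (t2, e2)) :: σ))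
  | r7 {σ : Store} {x x' x0 : Ident} {t t0 : Tm Ident} {e e0 : Env} {ℓ ℓ2 : Loc} {s : Stack}
      (hσ : lookupL σ ℓ = some (.pend x0 t0 e0))
      (hs1 : Stack.noArgTop s) (hs2 : Stack.noCacheTop s)
      (hℓ2 : lookupL σ ℓ2 = none)
      (hx' : x' ∉ confVars (.cont σ (.abs x t e ℓ) s)) :
      Step 7 (.cont σ (.abs x t e ℓ) s)
             (.eval (t, (x, ℓ2) :: e) (.lamF x' :: .cache ℓ :: s)
                    ((ℓ2, .done (.tm (.var x'))) :: σ))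
  | r8 {σ : Store} {x : Ident} {t : Tm Ident} {e : Env} {ℓ : Loc} {s : Stack} {v : Value}
      (hσ : lookupL σ ℓ = some (.done v))
      (hs1 : Stack.noArgTop s) (hs2 : Stack.noCacheTop s) :
      Step 8 (.cont σ (.abs x t e ℓ) s) (.cont σ v s)
  | r9 {σ : Store} {t t2 : Tm Ident} {e2 : Env} {s : Stack} :
      Step 9 (.cont σ (.tm t) (.arg (t2, e2) :: s)) (.eval (t2, e2) (.appL t :: s) σ)
  | r10 {σ : Store} {t1 t2 : Tm Ident} {s : Stack} :
      Step 10 (.cont σ (.tm t2) (.appL t1 :: s)) (.cont σ (.tm (.app t1 t2)) s)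
  | r11 {σ : Store} {t : Tm Ident} {x : Ident} {s : Stack} :
      Step 11 (.cont σ (.tm t) (.lamF x :: s)) (.cont σ (.tm (.lam x t)) s)

/-- Reachability by machine transitions. -/
inductive Reach (k0 : Conf) : Conf → Prop
  | refl : Reach k0 k0
  | step {k k' : Conf} {r : ℕ} : Reach k0 k → Step r k k' → Reach k0 k'

/-- The potential of a term. -/
def Φt : Tm Ident → ℕ
  | .var _ => 2
  | .app a b => 3 + Φt a + Φt b
  | .lam _ t => 4 + Φt t

/-- The potential of a value. -/
def Φv : Value → ℕ
  | .tm _ => 0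
  | .abs _ _ _ _ => 1

/-- The potential of a stack frame. -/
def Φf : Frame → ℕ
  | .arg c => 2 + Φt c.1
  | .appL _ => 1
  | .lamF _ => 1
  | .cache _ => 1

/-- The potential of a stack. -/
def Φs (s : Stack) : ℕ := s.foldr (fun f acc => Φf f + acc) 0

/-- Contribution of a single store entry to the store potential,
relative to a stack `s`: locations whose memoization frame `ℓ := □`
is on the stack contribute nothing; an unevaluated argument thunk `todo (t, e)`
contributes `Φt t`; an unnormalized abstraction placeholder (`todo ⊥`, allocated
for the abstraction with body `t`) contributes `2 + Φt t`; memoized values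
contribute nothing. -/
def Φσentry (s : Stack) (p : Loc × Storable) : ℕ :=
  if Frame.cache p.1 ∈ s then 0
  else
    match p.2 with
    | .todo c => Φt c.1
    | .pend _ t _ => 2 + Φt t
    | .done _ => 0

/-- The potential of a store (relative to a stack). -/
def Φσ (σ : Store) (s : Stack) : ℕ := σ.foldr (fun p acc => Φσentry s p + acc) 0

/-- The potential of a configuration. -/
def Φ : Conf → ℕ
  | .eval c s σ => Φt c.1 + Φs s + Φσ σ s
  | .cont σ v s => Φv v + Φs s + Φσ σ s

/-- Subterm relation. -/
inductive Sub : Tm Ident → Tm Ident → Prop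
  | refl (t : Tm Ident) : Sub t t
  | appL {u a b : Tm Ident} : Sub u a → Sub u (.app a b)
  | appR {u a b : Tm Ident} : Sub u b → Sub u (.app a b)
  | lam {u t : Tm Ident} {x : Ident} : Sub u t → Sub u (.lam x t)

lemma Sub.phi_le {u t : Tm Ident} (h : Sub u t) : Φt u ≤ Φt t := by
  induction h <;> simp [Φt] at * <;> omega

lemma Sub.trans {a b c : Tm Ident} (h1 : Sub a b) (h2 : Sub b c) : Sub a c := by
  induction h2 with
  | refl => exact h1
  | appL _ ih => exact Sub.appL ih
  | appR _ ih => exact Sub.appR ih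
  | lam _ ih => exact Sub.lam ih

lemma Sub.body {x : Ident} {t t0 : Tm Ident} (h : Sub (.lam x t) t0) : Sub t t0 :=
  Sub.trans (Sub.lam (Sub.refl t)) h

def GoodV (t0 : Tm Ident) : Value → Prop
  | .tm _ => True
  | .abs x t _ _ => Sub (.lam x t) t0

def GoodS (t0 : Tm Ident) : Storable → Prop
  | .pend x t _ => Sub (.lam x t) t0
  | .todo c => Sub c.1 t0
  | .done v => GoodV t0 v

def GoodF (t0 : Tm Ident) : Frame → Prop
  | .arg c => Sub c.1 t0
  | _ => True

def Good (t0 : Tm Ident) : Conf → Prop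
  | .eval c s σ => Sub c.1 t0 ∧ (∀ f ∈ s, GoodF t0 f) ∧ (∀ p ∈ σ, GoodS t0 p.2)
  | .cont σ v s => GoodV t0 v ∧ (∀ f ∈ s, GoodF t0 f) ∧ (∀ p ∈ σ, GoodS t0 p.2)

lemma lookup_good {β : Type} {P : β → Prop} {l : List (ℕ × β)} {x : ℕ} {b : β}
    (h : lookupL l x = some b) (hl : ∀ p ∈ l, P p.2) : P b := by
  induction l with
  | nil => simp [lookupL] at h
  | cons p l ih =>
    simp only [lookupL] at h
    split at h
    · cases h; exact hl p (List.mem_cons_self)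
    · exact ih h (fun q hq => hl q (List.mem_cons_of_mem _ hq))

lemma good_step {t0 : Tm Ident} {k k' : Conf} {r : ℕ}
    (hg : Good t0 k) (h : Step r k k') : Good t0 k' := by
  cases h with
  | r1 =>
    obtain ⟨h1, h2, h3⟩ := hg
    refine ⟨Sub.trans (Sub.appL (Sub.refl _)) h1, ?_, h3⟩
    intro f hf; rcases List.mem_cons.1 hf with hf | hf
    · subst hf; exact Sub.trans (Sub.appR (Sub.refl _)) h1
    · exact h2 f hf
  | r2 _ =>
    obtain ⟨h1, h2, h3⟩ := hg
    exact ⟨h1, h2, by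
      intro p hp; rcases List.mem_cons.1 hp with hp | hp
      · subst hp; exact h1
      · exact h3 p hp⟩
  | @r3 x e e2 s σ ℓ t he hσ =>
    obtain ⟨h1, h2, h3⟩ := hg
    refine ⟨?_, by
      intro f hf; rcases List.mem_cons.1 hf with hf | hf
      · subst hf; trivial
      · exact h2 f hf, h3⟩
    have : GoodS t0 (.todo (t, e2)) := lookup_good hσ h3
    exact this
  | @r4done x e s σ ℓ v he hσ =>
    obtain ⟨h1, h2, h3⟩ := hg
    have : GoodS t0 (.done v) := lookup_good hσ h3
    exact ⟨this, h2, h3⟩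
  | r4free he =>
    obtain ⟨h1, h2, h3⟩ := hg
    exact ⟨trivial, h2, h3⟩
  | @r5 σ v ℓ s =>
    obtain ⟨h1, h2, h3⟩ := hg
    refine ⟨h1, fun f hf => h2 f (List.mem_cons_of_mem _ hf), ?_⟩
    intro p hp
    rcases List.mem_map.1 hp with ⟨q, hq, hq2⟩
    by_cases hc : q.1 = ℓ
    · simp [hc] at hq2; subst hq2; exact h1
    · simp [hc] at hq2; subst hq2; exact h3 q hq
  | r6 hℓ =>
    obtain ⟨h1, h2, h3⟩ := hg
    refine ⟨h1.body, fun f hf => h2 f (List.mem_cons_of_mem _ hf), ?_⟩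
    intro p hp; rcases List.mem_cons.1 hp with hp | hp
    · subst hp; exact h2 _ (List.mem_cons_self)
    · exact h3 p hp
  | r7 hσ hs1 hs2 hℓ2 hx' =>
    obtain ⟨h1, h2, h3⟩ := hg
    refine ⟨h1.body, ?_, ?_⟩
    · intro f hf
      rcases List.mem_cons.1 hf with hf | hf
      · subst hf; trivial
      rcases List.mem_cons.1 hf with hf | hf
      · subst hf; trivial
      · exact h2 f hf
    · intro p hp; rcases List.mem_cons.1 hp with hp | hp
      · subst hp; trivial
      · exact h3 p hp
  | @r8 σ x t e ℓ s v hσ hs1 hs2 =>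
    obtain ⟨h1, h2, h3⟩ := hg
    have : GoodS t0 (.done v) := lookup_good hσ h3
    exact ⟨this, h2, h3⟩
  | r9 =>
    obtain ⟨h1, h2, h3⟩ := hg
    refine ⟨h2 _ (List.mem_cons_self), ?_, h3⟩
    intro f hf; rcases List.mem_cons.1 hf with hf | hf
    · subst hf; trivial
    · exact h2 f (List.mem_cons_of_mem _ hf)
  | r10 =>
    obtain ⟨h1, h2, h3⟩ := hg
    exact ⟨trivial, fun f hf => h2 f (List.mem_cons_of_mem _ hf), h3⟩
  | r11 =>
    obtain ⟨h1, h2, h3⟩ := hg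
    exact ⟨trivial, fun f hf => h2 f (List.mem_cons_of_mem _ hf), h3⟩

lemma good_reach {t0 : Tm Ident} {k : Conf} (h : Reach (Conf.init t0) k) :
    Good t0 k := by
  induction h with
  | refl => exact ⟨Sub.refl _, by simp, by simp⟩
  | step _ hs ih => exact good_step ih hs

lemma Φσ_cons {p : Loc × Storable} {σ : Store} {s : Stack} :
    Φσ (p :: σ) s = Φσentry s p + Φσ σ s := rfl

lemma Φσ_arg {σ : Store} {c : Closure} {s : Stack} :
    Φσ σ (Frame.arg c :: s) = Φσ σ s := by
  induction σ with
  | nil => rfl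
  | cons p σ ih =>
    rw [Φσ_cons, Φσ_cons, ih]
    congr 1
    simp [Φσentry]

/-- The β-transition (rule 6) increases the potential by less than the potential
of the initial term: if `k` is reachable from the initial term `t0`, then
`Φ k + Φt t0 > Φ k'`. -/
theorem potential_increase {t0 : Tm Ident} {k k' : Conf}
    (hreach : Reach (Conf.init t0) k) (h : Step 6 k k') :
    Φ k' < Φ k + Φt t0 := by
  have hg := good_reach hreach
  cases h with
  | @r6 σ x t t2 e e2 ℓ ℓ2 s hℓ =>
    obtain ⟨h1, h2, h3⟩ := hg
    have hbody : Φt t + 4 ≤ Φt t0 := by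
      have := h1.phi_le
      simp [Φt] at this; omega
    have hentry : Φσentry s (ℓ2, Storable.todo (t2, e2)) ≤ Φt t2 := by
      by_cases hc : Frame.cache ℓ2 ∈ s <;> simp [Φσentry, hc]
    simp only [Φ, Φσ_cons, Φσ_arg, Φs, List.foldr_cons, Φv, Φf] at *
    omega

end RKNL
end

section
/- Bilinearity of RKNL: for any execution ρ of the RKNL machine starting from an initial term t₀ and ending in configuration k', the total number of machine steps |ρ| satisfies |ρ| ≤ (|ρ|_β + 1) · Φt(t₀), where |ρ|_β is the number of β-transitions (rule 6) in ρ and Φt is the term potential. -/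
set_option autoImplicit false
set_option maxHeartbeats 1000000

namespace RKNL

/-- `Run k n b k'` : an execution of `n` machine steps from `k` to `k'`, among
which `b` are β-transitions (rule 6). -/
inductive Run : Conf → ℕ → ℕ → Conf → Prop
  | refl (k : Conf) : Run k 0 0 k
  | stepBeta {k k' k'' : Conf} {n b : ℕ} :
      Step 6 k k' → Run k' n b k'' → Run k (n + 1) (b + 1) k''
  | stepOther {k k' k'' : Conf} {n b r : ℕ} :
      r ≠ 6 → Step r k k' → Run k' n b k'' → Run k (n + 1) b k''

section Aux

open Relation

/-! ### lookup lemmas -/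

lemma lookupL_cons {β : Type} (a : ℕ) (b : β) (l : List (ℕ × β)) (x : ℕ) :
    lookupL ((a, b) :: l) x = if x = a then some b else lookupL l x := rfl

lemma lookup_mem {β : Type} {l : List (ℕ × β)} {x : ℕ} {b : β}
    (h : lookupL l x = some b) : (x, b) ∈ l := by
  induction l with
  | nil => simp [lookupL] at h
  | cons p l ih =>
    obtain ⟨a, c⟩ := p
    rw [lookupL_cons] at h
    split at h
    · simp_all
    · exact List.mem_cons_of_mem _ (ih h)

lemma lookupL_updL {β : Type} (l : List (ℕ × β)) (x y : ℕ) (b : β) :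
    lookupL (updL l x b) y =
      if y = x then ((lookupL l x).map fun _ => b) else lookupL l y := by
  induction l with
  | nil => simp [updL, lookupL]
  | cons p l ih =>
    obtain ⟨a, c⟩ := p
    simp only [updL, List.map_cons] at ih ⊢
    by_cases hax : a = x
    · rw [if_pos hax]
      by_cases hyx : y = x
      · simp [lookupL_cons, hyx, hax.symm]
      · have hya : ¬ y = a := fun h => hyx (h.trans hax)
        simp [lookupL_cons, hyx, ih, hya]
    · rw [if_neg hax]
      by_cases hya : y = a
      · have hyx : ¬ y = x := fun h => hax (hya.symm.trans h)
        simp [lookupL_cons, hya, hyx, hax]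
      · simp only [lookupL_cons, if_neg hya, ih]
        by_cases hyx : y = x
        · have hxa : ¬ x = a := fun h => hax h.symm
          simp [lookupL_cons, hyx, hxa]
        · simp [hyx]

/-! ### location sets -/

def envLocs (e : Env) : List Loc := e.map Prod.snd

def vLocs : Value → List Loc
  | .tm _ => []
  | .abs _ _ e ℓ => ℓ :: envLocs e

def svLocs : Storable → List Loc
  | .pend _ _ e => envLocs e
  | .todo c => envLocs c.2
  | .done v => vLocs v

def frameLocs : Frame → List Loc
  | .arg c => envLocs c.2
  | .appL _ => []
  | .lamF _ => []
  | .cache ℓ => [ℓ]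

def stackLocs (s : Stack) : List Loc := s.foldr (fun f acc => frameLocs f ++ acc) []

def focusLocs : Conf → List Loc
  | .eval c _ _ => envLocs c.2
  | .cont _ v _ => vLocs v

lemma mem_envLocs_of_lookup {e : Env} {x : Ident} {ℓ : Loc}
    (h : lookupL e x = some ℓ) : ℓ ∈ envLocs e := by
  have := lookup_mem h
  exact List.mem_map.2 ⟨(x, ℓ), this, rfl⟩

lemma stackLocs_cons (f : Frame) (s : Stack) :
    stackLocs (f :: s) = frameLocs f ++ stackLocs s := rfl

/-! ### reachability in the store -/

def edge (σ : Store) (a b : Loc) : Prop :=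
  ∃ sv, lookupL σ a = some sv ∧ b ∈ svLocs sv

def Rea (σ : Store) : Loc → Loc → Prop := Relation.ReflTransGen (edge σ)

def Acyc (σ : Store) : Prop := ∀ a b, edge σ a b → ¬ Rea σ b a

def LocsIn (σ : Store) (L : List Loc) : Prop :=
  ∀ ℓ ∈ L, ∃ sv, lookupL σ ℓ = some sv

def StoreClosed (σ : Store) : Prop := ∀ p ∈ σ, LocsIn σ (svLocs p.2)

lemma rea_refl (σ : Store) (a : Loc) : Rea σ a a := Relation.ReflTransGen.refl

lemma rea_trans {σ : Store} {a b c : Loc} (h1 : Rea σ a b) (h2 : Rea σ b c) :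
    Rea σ a c := Relation.ReflTransGen.trans h1 h2

lemma rea_of_edge {σ : Store} {a b : Loc} (h : edge σ a b) : Rea σ a b :=
  Relation.ReflTransGen.single h

/-- targets of reachability are in the store (closed store). -/
lemma rea_target_keys {σ : Store} (hc : StoreClosed σ) {a b : Loc}
    (h : Rea σ a b) (hne : a ≠ b) : ∃ sv, lookupL σ b = some sv := by
  induction h with
  | refl => exact absurd rfl hne
  | tail _ e _ =>
    obtain ⟨sv, hsv, hb⟩ := e
    exact hc _ (lookup_mem hsv) _ hb

/-- paths from an old location avoid a freshly-consed location. -/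
lemma rea_cons_old {σ : Store} {ℓf : Loc} {sv : Storable}
    (hc : StoreClosed σ) (hf : lookupL σ ℓf = none) {a b : Loc}
    (h : Rea ((ℓf, sv) :: σ) a b) (ha : a ≠ ℓf) : Rea σ a b := by
  induction h using Relation.ReflTransGen.head_induction_on with
  | refl => exact Relation.ReflTransGen.refl
  | head e _ ih =>
    rename_i x c _
    obtain ⟨sv', hsv', hc'⟩ := e
    rw [lookupL_cons, if_neg ha] at hsv'
    have hcne : c ≠ ℓf := by
      obtain ⟨sv'', h''⟩ := hc _ (lookup_mem hsv') _ hc'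
      intro hceq; rw [hceq, hf] at h''; exact absurd h'' (by simp)
    exact Relation.ReflTransGen.head ⟨sv', hsv', hc'⟩ (ih hcne)

/-- paths from the freshly-consed location. -/
lemma rea_cons_new {σ : Store} {ℓf : Loc} {sv : Storable}
    (hc : StoreClosed σ) (hf : lookupL σ ℓf = none)
    (hsv : LocsIn σ (svLocs sv)) {b : Loc}
    (h : Rea ((ℓf, sv) :: σ) ℓf b) :
    b = ℓf ∨ ∃ c ∈ svLocs sv, Rea σ c b := by
  rcases Relation.ReflTransGen.cases_head h with heq | ⟨c, he, hr⟩
  · exact Or.inl heq.symm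
  · obtain ⟨sv', hsv', hc'⟩ := he
    rw [lookupL_cons, if_pos rfl] at hsv'
    obtain rfl : sv = sv' := by injection hsv'
    have hcne : c ≠ ℓf := by
      obtain ⟨sv'', h''⟩ := hsv _ hc'
      intro hceq; rw [hceq, hf] at h''; exact absurd h'' (by simp)
    exact Or.inr ⟨c, hc', rea_cons_old hc hf hr hcne⟩

/-- decomposition of reachability after a `done` update. -/
lemma rea_upd {σ : Store} {ℓ : Loc} {v : Value} {a b : Loc}
    (h : Rea (updL σ ℓ (.done v)) a b) :
    Rea σ a b ∨ (Rea σ a ℓ ∧ ∃ c ∈ vLocs v, Rea σ c b) := by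
  induction h using Relation.ReflTransGen.head_induction_on with
  | refl => exact Or.inl Relation.ReflTransGen.refl
  | head e _ ih =>
    rename_i x c _
    obtain ⟨sv', hsv', hc'⟩ := e
    rw [lookupL_updL] at hsv'
    by_cases hx : x = ℓ
    · subst hx
      rw [if_pos rfl] at hsv'
      cases hσx : lookupL σ x with
      | none => rw [hσx] at hsv'; simp at hsv'
      | some sv0 =>
        rw [hσx] at hsv'
        obtain rfl : Storable.done v = sv' := by injection hsv'
        rcases ih with h1 | ⟨_, h2⟩
        · exact Or.inr ⟨Relation.ReflTransGen.refl, c, hc', h1⟩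
        · exact Or.inr ⟨Relation.ReflTransGen.refl, h2⟩
    · rw [if_neg hx] at hsv'
      rcases ih with h1 | ⟨h2, h3⟩
      · exact Or.inl (Relation.ReflTransGen.head ⟨sv', hsv', hc'⟩ h1)
      · exact Or.inr ⟨Relation.ReflTransGen.head ⟨sv', hsv', hc'⟩ h2, h3⟩

/-! ### acyclicity preservation -/

lemma acyc_cons {σ : Store} {ℓf : Loc} {sv : Storable}
    (ha : Acyc σ) (hc : StoreClosed σ) (hf : lookupL σ ℓf = none)
    (hsv : LocsIn σ (svLocs sv)) : Acyc ((ℓf, sv) :: σ) := by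
  intro a b he hr
  obtain ⟨sv', hsv', hb⟩ := he
  by_cases hax : a = ℓf
  · rw [lookupL_cons, if_pos hax] at hsv'
    obtain rfl : sv = sv' := by injection hsv'
    have hbne : b ≠ ℓf := by
      obtain ⟨sv'', h''⟩ := hsv _ hb
      intro hbeq; rw [hbeq, hf] at h''; exact absurd h'' (by simp)
    have hro : Rea σ b ℓf := by
      have := rea_cons_old hc hf hr hbne
      rwa [hax] at this
    obtain ⟨sv'', h''⟩ := rea_target_keys hc hro hbne
    rw [hf] at h''; exact absurd h'' (by simp)
  · rw [lookupL_cons, if_neg hax] at hsv'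
    have hbne : b ≠ ℓf := by
      obtain ⟨sv'', h''⟩ := hc _ (lookup_mem hsv') _ hb
      intro hbeq; rw [hbeq, hf] at h''; exact absurd h'' (by simp)
    exact ha a b ⟨sv', hsv', hb⟩ (rea_cons_old hc hf hr hbne)

lemma acyc_upd {σ : Store} {ℓ : Loc} {v : Value}
    (ha : Acyc σ) (hv : ∀ c ∈ vLocs v, ¬ Rea σ c ℓ) :
    Acyc (updL σ ℓ (.done v)) := by
  intro a b he hr
  obtain ⟨sv', hsv', hb⟩ := he
  rw [lookupL_updL] at hsv'
  by_cases hax : a = ℓ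
  · subst hax
    rw [if_pos rfl] at hsv'
    cases hσx : lookupL σ a with
    | none => rw [hσx] at hsv'; simp at hsv'
    | some sv0 =>
      rw [hσx] at hsv'
      obtain rfl : Storable.done v = sv' := by injection hsv'
      rcases rea_upd hr with h1 | ⟨h2, _, hc2, _⟩
      · exact hv b hb h1
      · exact hv b hb h2
  · rw [if_neg hax] at hsv'
    rcases rea_upd hr with h1 | ⟨h2, c, hc2, h3⟩
    · exact ha a b ⟨sv', hsv', hb⟩ h1
    · exact hv c hc2 (rea_trans h3 (rea_trans (rea_of_edge ⟨sv', hsv', hb⟩) h2))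

end Aux

section Aux2

/-! ### store potential lemmas -/

lemma phiσ_cons (p : Loc × Storable) (σ : Store) (s : Stack) :
    Φσ (p :: σ) s = Φσentry s p + Φσ σ s := rfl

lemma phiσ_congr {σ : Store} {s s' : Stack}
    (h : ∀ p ∈ σ, Φσentry s p = Φσentry s' p) : Φσ σ s = Φσ σ s' := by
  induction σ with
  | nil => rfl
  | cons p σ ih =>
    rw [phiσ_cons, phiσ_cons, h p (by simp), ih (fun q hq => h q (by simp [hq]))]

lemma phiσ_le {σ : Store} {s s' : Stack}
    (h : ∀ p ∈ σ, Φσentry s p ≤ Φσentry s' p) : Φσ σ s ≤ Φσ σ s' := by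
  induction σ with
  | nil => exact le_rfl
  | cons p σ ih =>
    rw [phiσ_cons, phiσ_cons]
    exact Nat.add_le_add (h p (by simp)) (ih (fun q hq => h q (by simp [hq])))

lemma phiσentry_congr {s s' : Stack} (p : Loc × Storable)
    (h : Frame.cache p.1 ∈ s ↔ Frame.cache p.1 ∈ s') :
    Φσentry s p = Φσentry s' p := by
  unfold Φσentry
  by_cases hm : Frame.cache p.1 ∈ s
  · rw [if_pos hm, if_pos (h.1 hm)]
  · rw [if_neg hm, if_neg (fun hm' => hm (h.2 hm'))]

/-- pushing a non-cache frame does not change the store potential. -/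
lemma phiσ_noncache {f : Frame} (hf : ∀ ℓ, f ≠ Frame.cache ℓ) (σ : Store) (s : Stack) :
    Φσ σ (f :: s) = Φσ σ s := by
  apply phiσ_congr
  intro p _
  apply phiσentry_congr
  constructor
  · intro h
    rcases List.mem_cons.1 h with h | h
    · exact absurd h.symm (hf p.1)
    · exact h
  · exact fun h => List.mem_cons_of_mem _ h

def svWt : Storable → ℕ
  | .pend _ t _ => 2 + Φt t
  | .todo c => Φt c.1
  | .done _ => 0

lemma phiσentry_cache_le (q : Loc × Storable) (ℓ : Loc) (s : Stack) :
    Φσentry (Frame.cache ℓ :: s) q ≤ Φσentry s q := by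
  unfold Φσentry
  by_cases hq : Frame.cache q.1 ∈ s
  · rw [if_pos (List.mem_cons_of_mem _ hq), if_pos hq]
  · rw [if_neg hq]
    by_cases hq2 : Frame.cache q.1 ∈ Frame.cache ℓ :: s
    · rw [if_pos hq2]; exact Nat.zero_le _
    · rw [if_neg hq2]

lemma phiσentry_le_svWt (s : Stack) (p : Loc × Storable) :
    Φσentry s p ≤ svWt p.2 := by
  unfold Φσentry
  by_cases h : Frame.cache p.1 ∈ s
  · rw [if_pos h]; exact Nat.zero_le _
  · rw [if_neg h]; obtain ⟨a, sv⟩ := p; cases sv <;> simp [svWt]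

/-- pushing a cache frame for a live location releases its weight. -/
lemma phiσ_cache_push {σ : Store} {ℓ : Loc} {sv : Storable} {s : Stack}
    (hns : Frame.cache ℓ ∉ s) (hσ : lookupL σ ℓ = some sv) :
    svWt sv + Φσ σ (Frame.cache ℓ :: s) ≤ Φσ σ s := by
  induction σ with
  | nil => simp [lookupL] at hσ
  | cons p σ ih =>
    obtain ⟨a, sv'⟩ := p
    rw [phiσ_cons, phiσ_cons]
    rw [lookupL_cons] at hσ
    by_cases hℓa : ℓ = a
    · rw [if_pos hℓa] at hσ
      have hsveq : sv' = sv := by injection hσ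
      rw [hsveq]
      have hca : Frame.cache a ∈ Frame.cache ℓ :: s := by
        simp [hℓa]
      have hna : Frame.cache a ∉ s := by rw [← hℓa]; exact hns
      have h1 : Φσentry (Frame.cache ℓ :: s) (a, sv) = 0 := by
        unfold Φσentry; rw [if_pos hca]
      have h2 : Φσentry s (a, sv) = svWt sv := by
        unfold Φσentry
        rw [if_neg hna]
        cases sv <;> rfl
      have h3 : Φσ σ (Frame.cache ℓ :: s) ≤ Φσ σ s :=
        phiσ_le (fun q _ => phiσentry_cache_le q ℓ s)
      rw [h1, h2]
      omega
    · rw [if_neg hℓa] at hσ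
      have h4 : Φσentry (Frame.cache ℓ :: s) (a, sv') = Φσentry s (a, sv') := by
        apply phiσentry_congr
        simp only []
        constructor
        · intro h
          rcases List.mem_cons.1 h with h | h
          · exact absurd (by simpa using h.symm) hℓa
          · exact h
        · exact fun h => List.mem_cons_of_mem _ h
      have := ih hσ
      omega

/-- memoizing the top cache frame does not increase the potential. -/
lemma phiσ_upd {σ : Store} {ℓ : Loc} {v : Value} {s : Stack} :
    Φσ (updL σ ℓ (.done v)) s ≤ Φσ σ (Frame.cache ℓ :: s) := by
  induction σ with
  | nil => simp [updL, Φσ]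
  | cons p σ ih =>
    obtain ⟨a, sv⟩ := p
    show Φσ ((if a = ℓ then (ℓ, Storable.done v) else (a, sv)) :: updL σ ℓ (.done v)) s ≤ _
    rw [phiσ_cons, phiσ_cons]
    apply Nat.add_le_add _ ih
    by_cases haℓ : a = ℓ
    · rw [if_pos haℓ]
      have h1 : Φσentry (Frame.cache ℓ :: s) (a, sv) = 0 := by
        unfold Φσentry
        rw [if_pos (show Frame.cache (a, sv).1 ∈ Frame.cache ℓ :: s by
          rw [haℓ]; exact List.mem_cons_self)]
      have h2 : Φσentry s (ℓ, Storable.done v) ≤ 0 :=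
        le_trans (phiσentry_le_svWt s _) (by simp [svWt])
      omega
    · rw [if_neg haℓ]
      have : Φσentry s (a, sv) = Φσentry (Frame.cache ℓ :: s) (a, sv) := by
        apply phiσentry_congr
        constructor
        · exact fun h => List.mem_cons_of_mem _ h
        · intro h
          rcases List.mem_cons.1 h with h | h
          · exact absurd (by simpa using h) haℓ
          · exact h
      omega

lemma phiσ_le_cons (p : Loc × Storable) (σ : Store) (s : Stack) :
    Φσ (p :: σ) s ≤ svWt p.2 + Φσ σ s := by
  rw [phiσ_cons]
  exact Nat.add_le_add_right (phiσentry_le_svWt s p) _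

lemma phis_cons (f : Frame) (s : Stack) : Φs (f :: s) = Φf f + Φs s := rfl

/-! ### invariant definitions -/

def ValPot (B : ℕ) : Value → Prop
  | .tm _ => True
  | .abs _ t _ _ => 4 + Φt t ≤ B

def SvPot (B : ℕ) : Storable → Prop
  | .pend _ t _ => 4 + Φt t ≤ B
  | .todo c => Φt c.1 ≤ B
  | .done v => ValPot B v

def FramePot (B : ℕ) : Frame → Prop
  | .arg c => Φt c.1 ≤ B
  | _ => True

def FocusPot (B : ℕ) : Conf → Prop
  | .eval c _ _ => Φt c.1 ≤ B
  | .cont _ v _ => ValPot B v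

def PotOK (B : ℕ) (k : Conf) : Prop :=
  FocusPot B k ∧ (∀ f ∈ k.stack, FramePot B f) ∧ (∀ p ∈ k.store, SvPot B p.2)

def isTP (σ : Store) (ℓ : Loc) : Prop :=
  (∃ x t e, lookupL σ ℓ = some (.pend x t e)) ∨ (∃ c, lookupL σ ℓ = some (.todo c))

def CachesOK (σ : Store) (S : List Loc) (s : Stack) : Prop :=
  ∀ s₁ ℓc s₂, s = s₁ ++ Frame.cache ℓc :: s₂ →
    isTP σ ℓc ∧ ∀ a, (a ∈ S ∨ a ∈ stackLocs s₁) → ¬ Rea σ a ℓc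

def ValAP (σ : Store) : Value → Prop
  | .tm _ => True
  | .abs x t e ℓ =>
      lookupL σ ℓ = some (.pend x t e) ∨ ∃ t', lookupL σ ℓ = some (.done (.tm t'))

def focusVal : Conf → Option Value
  | .eval _ _ _ => none
  | .cont _ v _ => some v

def AbsPendOK (k : Conf) : Prop :=
  (∀ v, focusVal k = some v → ValAP k.store v) ∧
  ∀ p ∈ k.store, ∀ v, p.2 = .done v → ValAP k.store v

def PendShape (k : Conf) : Prop :=
  ∀ ℓ x0 t0 e0, lookupL k.store ℓ = some (.pend x0 t0 e0) → Frame.cache ℓ ∈ k.stack →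
    (∃ s₁ x s₂, k.stack = s₁ ++ Frame.lamF x :: Frame.cache ℓ :: s₂) ∨
    (∃ t' s₂, k.stack = Frame.cache ℓ :: s₂ ∧ focusVal k = some (.tm t'))

structure Inv (B : ℕ) (k : Conf) : Prop where
  pot : PotOK B k
  cl1 : LocsIn k.store (focusLocs k)
  cl2 : LocsIn k.store (stackLocs k.stack)
  cl3 : StoreClosed k.store
  acyc : Acyc k.store
  caches : CachesOK k.store (focusLocs k) k.stack
  ap : AbsPendOK k
  ps : PendShape k

/-! ### small consequences -/

lemma locsIn_cons {σ : Store} {p : Loc × Storable} {L : List Loc}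
    (h : LocsIn σ L) : LocsIn (p :: σ) L := by
  intro ℓ hℓ
  obtain ⟨sv, hsv⟩ := h ℓ hℓ
  obtain ⟨a, b⟩ := p
  rw [lookupL_cons]
  by_cases hℓa : ℓ = a
  · exact ⟨b, by rw [if_pos hℓa]⟩
  · exact ⟨sv, by rw [if_neg hℓa]; exact hsv⟩

lemma locsIn_upd {σ : Store} {ℓ : Loc} {v : Value} {L : List Loc}
    (h : LocsIn σ L) : LocsIn (updL σ ℓ (.done v)) L := by
  intro a ha
  obtain ⟨sv, hsv⟩ := h a ha
  rw [lookupL_updL]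
  by_cases haℓ : a = ℓ
  · subst haℓ
    exact ⟨.done v, by rw [if_pos rfl, hsv]; rfl⟩
  · exact ⟨sv, by rw [if_neg haℓ]; exact hsv⟩

lemma locsIn_append {σ : Store} {L L' : List Loc} :
    LocsIn σ (L ++ L') ↔ (LocsIn σ L ∧ LocsIn σ L') := by
  constructor
  · intro h
    exact ⟨fun ℓ hℓ => h ℓ (List.mem_append_left _ hℓ),
           fun ℓ hℓ => h ℓ (List.mem_append_right _ hℓ)⟩
  · rintro ⟨h1, h2⟩ ℓ hℓ
    rcases List.mem_append.1 hℓ with h | h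
    · exact h1 ℓ h
    · exact h2 ℓ h

lemma valAP_cons {σ : Store} {p : Loc × Storable} {v : Value}
    (hf : lookupL σ p.1 = none) (h : ValAP σ v) : ValAP (p :: σ) v := by
  cases v with
  | tm _ => trivial
  | abs x t e ℓ =>
    obtain ⟨a, b⟩ := p
    have h2 : lookupL σ ℓ = some (.pend x t e) ∨
        ∃ t2, lookupL σ ℓ = some (.done (.tm t2)) := h
    have hℓa : ℓ ≠ a := by
      rintro rfl
      rcases h2 with h3 | ⟨t2, h3⟩ <;> (rw [hf] at h3; simp at h3)
    show lookupL ((a, b) :: σ) ℓ = some (.pend x t e) ∨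
        ∃ t2, lookupL ((a, b) :: σ) ℓ = some (.done (.tm t2))
    rw [lookupL_cons, if_neg hℓa]
    exact h2

/-- a cache on the stack has a live (todo/pend) entry. -/
lemma cachesOK_mem {σ : Store} {S : List Loc} {s : Stack} {ℓ : Loc}
    (h : CachesOK σ S s) (hm : Frame.cache ℓ ∈ s) : isTP σ ℓ := by
  obtain ⟨s₁, s₂, rfl⟩ := List.append_of_mem hm
  exact (h s₁ ℓ s₂ rfl).1

lemma isTP_ne_fresh {σ : Store} {ℓ ℓf : Loc} (h : isTP σ ℓ)
    (hf : lookupL σ ℓf = none) : ℓ ≠ ℓf := by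
  rintro rfl
  rcases h with ⟨_, _, _, h⟩ | ⟨_, h⟩ <;> (rw [hf] at h; simp at h)

end Aux2

section Aux3

/-! ### CachesOK transfer lemmas -/

lemma stackLocs_append (s₁ s₂ : Stack) :
    stackLocs (s₁ ++ s₂) = stackLocs s₁ ++ stackLocs s₂ := by
  induction s₁ with
  | nil => rfl
  | cons f s₁ ih => simp [stackLocs_cons, ih]

lemma isTP_cons {σ : Store} {ℓ ℓf : Loc} {sv : Storable}
    (h : isTP σ ℓ) (hne : ℓ ≠ ℓf) : isTP ((ℓf, sv) :: σ) ℓ := by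
  rcases h with ⟨x, t, e, h⟩ | ⟨c, h⟩
  · exact Or.inl ⟨x, t, e, by rw [lookupL_cons, if_neg hne]; exact h⟩
  · exact Or.inr ⟨c, by rw [lookupL_cons, if_neg hne]; exact h⟩

lemma isTP_upd {σ : Store} {ℓ ℓw : Loc} {v : Value}
    (h : isTP σ ℓ) (hne : ℓ ≠ ℓw) : isTP (updL σ ℓw (.done v)) ℓ := by
  rcases h with ⟨x, t, e, h⟩ | ⟨c, h⟩
  · exact Or.inl ⟨x, t, e, by rw [lookupL_updL, if_neg hne]; exact h⟩
  · exact Or.inr ⟨c, by rw [lookupL_updL, if_neg hne]; exact h⟩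

/-- pushing a non-cache frame, store unchanged. -/
lemma cachesOK_push {σ : Store} {S S' : List Loc} {s : Stack} {f : Frame}
    (hf : ∀ ℓ, f ≠ .cache ℓ)
    (h : CachesOK σ S s)
    (hcov : ∀ a, (a ∈ S' ∨ a ∈ frameLocs f) → ∃ b ∈ S, Rea σ b a) :
    CachesOK σ S' (f :: s) := by
  intro s₁ ℓc s₂ heq
  cases s₁ with
  | nil =>
    injection heq with h1 _
    exact absurd h1 (hf ℓc)
  | cons f' s₁ =>
    injection heq with h1 h2
    subst h1
    obtain ⟨htp, hno⟩ := h s₁ ℓc s₂ h2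
    refine ⟨htp, fun a ha hrea => ?_⟩
    rcases ha with ha | ha
    · obtain ⟨b, hb, hr⟩ := hcov a (Or.inl ha)
      exact hno b (Or.inl hb) (rea_trans hr hrea)
    · rw [stackLocs_cons] at ha
      rcases List.mem_append.1 ha with ha | ha
      · obtain ⟨b, hb, hr⟩ := hcov a (Or.inr ha)
        exact hno b (Or.inl hb) (rea_trans hr hrea)
      · exact hno a (Or.inr ha) hrea

/-- popping the top frame, store unchanged. -/
lemma cachesOK_pop {σ : Store} {S S' : List Loc} {s : Stack} {f : Frame}
    (h : CachesOK σ S (f :: s))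
    (hcov : ∀ a ∈ S', ∃ b, (b ∈ S ∨ b ∈ frameLocs f) ∧ Rea σ b a) :
    CachesOK σ S' s := by
  intro s₁ ℓc s₂ heq
  obtain ⟨htp, hno⟩ := h (f :: s₁) ℓc s₂ (by rw [heq]; rfl)
  refine ⟨htp, fun a ha hrea => ?_⟩
  rcases ha with ha | ha
  · obtain ⟨b, hb | hb, hr⟩ := hcov a ha
    · exact hno b (Or.inl hb) (rea_trans hr hrea)
    · exact hno b (Or.inr (by rw [stackLocs_cons]; exact List.mem_append_left _ hb))
        (rea_trans hr hrea)
  · exact hno a (Or.inr (by rw [stackLocs_cons]; exact List.mem_append_right _ ha)) hrea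

/-- keeping the stack, store unchanged, new covered sources. -/
lemma cachesOK_mono {σ : Store} {S S' : List Loc} {s : Stack}
    (h : CachesOK σ S s)
    (hcov : ∀ a ∈ S', ∃ b ∈ S, Rea σ b a) :
    CachesOK σ S' s := by
  intro s₁ ℓc s₂ heq
  obtain ⟨htp, hno⟩ := h s₁ ℓc s₂ heq
  refine ⟨htp, fun a ha hrea => ?_⟩
  rcases ha with ha | ha
  · obtain ⟨b, hb, hr⟩ := hcov a ha
    exact hno b (Or.inl hb) (rea_trans hr hrea)
  · exact hno a (Or.inr ha) hrea

/-- consing a fresh store entry, stack unchanged. -/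
lemma cachesOK_consStore {σ : Store} {S S' : List Loc} {s : Stack}
    {ℓf : Loc} {sv : Storable}
    (h : CachesOK σ S s)
    (hc : StoreClosed σ) (hf : lookupL σ ℓf = none)
    (hsv : LocsIn σ (svLocs sv))
    (hstk : LocsIn σ (stackLocs s))
    (hsvcov : ∀ c ∈ svLocs sv, ∃ b ∈ S, Rea σ b c)
    (hcov : ∀ a ∈ S', a = ℓf ∨ ((∃ sv', lookupL σ a = some sv') ∧ ∃ b ∈ S, Rea σ b a)) :
    CachesOK ((ℓf, sv) :: σ) S' s := by
  intro s₁ ℓc s₂ heq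
  obtain ⟨htp, hno⟩ := h s₁ ℓc s₂ heq
  have hℓcne : ℓc ≠ ℓf := isTP_ne_fresh htp hf
  refine ⟨isTP_cons htp hℓcne, fun a ha hrea => ?_⟩
  rcases ha with ha | ha
  · rcases hcov a ha with rfl | ⟨⟨sv', hsv'⟩, b, hb, hr⟩
    · rcases rea_cons_new hc hf hsv hrea with h1 | ⟨c, hcm, hr⟩
      · exact hℓcne h1
      · obtain ⟨b, hb, hr2⟩ := hsvcov c hcm
        exact hno b (Or.inl hb) (rea_trans hr2 hr)
    · have hane : a ≠ ℓf := by
        rintro rfl; rw [hf] at hsv'; simp at hsv'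
      exact hno b (Or.inl hb) (rea_trans hr (rea_cons_old hc hf hrea hane))
  · have hastk : ∃ sv', lookupL σ a = some sv' := by
      apply hstk
      rw [heq, stackLocs_append]
      exact List.mem_append_left _ ha
    have hane : a ≠ ℓf := by
      rintro rfl; obtain ⟨sv', hsv'⟩ := hastk; rw [hf] at hsv'; simp at hsv'
    exact hno a (Or.inr ha) (rea_cons_old hc hf hrea hane)

/-- popping the top cache frame and memoizing. -/
lemma cachesOK_upd {σ : Store} {s : Stack} {ℓ : Loc} {v : Value}
    (h : CachesOK σ (vLocs v) (Frame.cache ℓ :: s)) :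
    CachesOK (updL σ ℓ (.done v)) (vLocs v) s := by
  intro s₁ ℓc s₂ heq
  obtain ⟨htp, hno⟩ := h (Frame.cache ℓ :: s₁) ℓc s₂ (by rw [heq]; rfl)
  have hℓmem : ℓ ∈ stackLocs (Frame.cache ℓ :: s₁) := by
    rw [stackLocs_cons]; exact List.mem_append_left _ (by simp [frameLocs])
  have hℓcne : ℓc ≠ ℓ := fun hh => hno ℓ (Or.inr hℓmem) (hh ▸ rea_refl σ ℓ)
  refine ⟨isTP_upd htp hℓcne, fun a ha hrea => ?_⟩
  rcases rea_upd hrea with h1 | ⟨_, c, hcm, hr⟩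
  · rcases ha with ha | ha
    · exact hno a (Or.inl ha) h1
    · exact hno a (Or.inr (by rw [stackLocs_cons]; exact List.mem_append_right _ ha)) h1
  · exact hno c (Or.inl hcm) hr

end Aux3

section Aux4

lemma phiv_le (v : Value) : Φv v ≤ 1 := by cases v <;> simp [Φv]

lemma inv_r1 {B : ℕ} {t1 t2 : Tm Ident} {e : Env} {s : Stack} {σ : Store}
    (hI : Inv B (.eval (.app t1 t2, e) s σ)) :
    Inv B (.eval (t1, e) (.arg (t2, e) :: s) σ) ∧
    Φ (.eval (t1, e) (.arg (t2, e) :: s) σ) + 1 ≤ Φ (.eval (.app t1 t2, e) s σ) := by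
  obtain ⟨⟨hfoc, hfr, hst⟩, hc1, hc2, hc3, hac, hca, ⟨hap1, hap2⟩, hps⟩ := hI
  simp only [PendShape, Conf.stack, Conf.store, focusLocs, focusVal] at hc1 hc2 hc3 hac hca hps hap1 hap2 hfoc hfr hst
  have happ : 3 + Φt t1 + Φt t2 ≤ B := by simpa [FocusPot, Φt] using hfoc
  constructor
  · refine ⟨⟨?_, ?_, hst⟩, hc1, ?_, hc3, hac, ?_, ⟨?_, hap2⟩, ?_⟩
    · show Φt t1 ≤ B; omega
    · intro f hf
      rcases List.mem_cons.1 hf with rfl | hf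
      · show Φt t2 ≤ B; omega
      · exact hfr f hf
    · show LocsIn σ (stackLocs (Frame.arg (t2, e) :: s))
      rw [stackLocs_cons]
      exact locsIn_append.2 ⟨hc1, hc2⟩
    · exact cachesOK_push (fun ℓ h => Frame.noConfusion h) hca
        (fun a ha => by
          rcases ha with ha | ha <;>
          exact ⟨a, ha, rea_refl σ a⟩)
    · intro v hv; exact Option.noConfusion rfl (heq_of_eq hv)
    · intro ℓ x0 t0 e0 hσℓ hm
      simp only [Conf.stack, Conf.store, focusVal] at hσℓ hm ⊢
      rcases List.mem_cons.1 hm with hh | hm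
      · exact Frame.noConfusion hh
      · rcases hps ℓ x0 t0 e0 hσℓ hm with ⟨s₁, x, s₂, heq⟩ | ⟨t', s₂, heq, hfv⟩
        · exact Or.inl ⟨Frame.arg (t2, e) :: s₁, x, s₂, by rw [heq]; rfl⟩
        · exact Option.noConfusion rfl (heq_of_eq hfv)
  · have h1 : Φσ σ (Frame.arg (t2, e) :: s) = Φσ σ s :=
      phiσ_noncache (fun ℓ h => Frame.noConfusion h) σ s
    show Φt t1 + Φs (Frame.arg (t2, e) :: s) + Φσ σ (Frame.arg (t2, e) :: s) + 1 ≤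
      Φt (.app t1 t2) + Φs s + Φσ σ s
    rw [h1, phis_cons]
    show Φt t1 + (2 + Φt t2 + Φs s) + Φσ σ s + 1 ≤ 3 + Φt t1 + Φt t2 + Φs s + Φσ σ s
    omega

lemma inv_r4done {B : ℕ} {x : Ident} {e : Env} {s : Stack} {σ : Store} {ℓ : Loc} {v : Value}
    (he : lookupL e x = some ℓ) (hσ : lookupL σ ℓ = some (.done v))
    (hI : Inv B (.eval (.var x, e) s σ)) :
    Inv B (.cont σ v s) ∧ Φ (.cont σ v s) + 1 ≤ Φ (.eval (.var x, e) s σ) := by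
  obtain ⟨⟨hfoc, hfr, hst⟩, hc1, hc2, hc3, hac, hca, ⟨hap1, hap2⟩, hps⟩ := hI
  simp only [PendShape, Conf.stack, Conf.store, focusLocs, focusVal] at hc1 hc2 hc3 hac hca hps hap1 hap2 hfoc hfr hst
  have hmem : (ℓ, Storable.done v) ∈ σ := lookup_mem hσ
  have hℓe : ℓ ∈ envLocs e := mem_envLocs_of_lookup he
  constructor
  · refine ⟨⟨?_, hfr, hst⟩, ?_, hc2, hc3, hac, ?_, ⟨?_, hap2⟩, ?_⟩
    · exact hst _ hmem
    · exact hc3 _ hmem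
    · exact cachesOK_mono hca
        (fun a ha => ⟨ℓ, hℓe, rea_of_edge ⟨.done v, hσ, ha⟩⟩)
    · intro v' hv'
      obtain rfl : v = v' := by injection hv'
      exact hap2 _ hmem v rfl
    · intro ℓ' x0 t0 e0 hσℓ hm
      simp only [Conf.stack, Conf.store, focusVal] at hσℓ hm ⊢
      rcases hps ℓ' x0 t0 e0 hσℓ hm with ⟨s₁, y, s₂, heq⟩ | ⟨t', s₂, heq, hfv⟩
      · exact Or.inl ⟨s₁, y, s₂, heq⟩
      · exact Option.noConfusion rfl (heq_of_eq hfv)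
  · have := phiv_le v
    show Φv v + Φs s + Φσ σ s + 1 ≤ Φt (.var x) + Φs s + Φσ σ s
    show Φv v + Φs s + Φσ σ s + 1 ≤ 2 + Φs s + Φσ σ s
    omega

lemma inv_r4free {B : ℕ} {x : Ident} {e : Env} {s : Stack} {σ : Store}
    (hI : Inv B (.eval (.var x, e) s σ)) :
    Inv B (.cont σ (.tm (.var x)) s) ∧
    Φ (.cont σ (.tm (.var x)) s) + 1 ≤ Φ (.eval (.var x, e) s σ) := by
  obtain ⟨⟨hfoc, hfr, hst⟩, hc1, hc2, hc3, hac, hca, ⟨hap1, hap2⟩, hps⟩ := hI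
  simp only [PendShape, Conf.stack, Conf.store, focusLocs, focusVal] at hc1 hc2 hc3 hac hca hps hap1 hap2 hfoc hfr hst
  constructor
  · refine ⟨⟨trivial, hfr, hst⟩, ?_, hc2, hc3, hac, ?_, ⟨?_, hap2⟩, ?_⟩
    · intro a ha; simp only [focusLocs, vLocs, List.mem_nil_iff] at ha
    · exact cachesOK_mono hca (fun a ha => by simp only [focusLocs, vLocs, List.mem_nil_iff] at ha)
    · intro v' hv'
      obtain rfl : Value.tm (.var x) = v' := by injection hv'
      trivial
    · intro ℓ' x0 t0 e0 hσℓ hm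
      simp only [Conf.stack, Conf.store, focusVal] at hσℓ hm ⊢
      rcases hps ℓ' x0 t0 e0 hσℓ hm with ⟨s₁, y, s₂, heq⟩ | ⟨t', s₂, heq, hfv⟩
      · exact Or.inl ⟨s₁, y, s₂, heq⟩
      · exact Option.noConfusion rfl (heq_of_eq hfv)
  · show Φv (.tm (.var x)) + Φs s + Φσ σ s + 1 ≤ 2 + Φs s + Φσ σ s
    show 0 + Φs s + Φσ σ s + 1 ≤ 2 + Φs s + Φσ σ s
    omega

lemma inv_r9 {B : ℕ} {σ : Store} {t t2 : Tm Ident} {e2 : Env} {s : Stack}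
    (hI : Inv B (.cont σ (.tm t) (.arg (t2, e2) :: s))) :
    Inv B (.eval (t2, e2) (.appL t :: s) σ) ∧
    Φ (.eval (t2, e2) (.appL t :: s) σ) + 1 ≤ Φ (.cont σ (.tm t) (.arg (t2, e2) :: s)) := by
  obtain ⟨⟨hfoc, hfr, hst⟩, hc1, hc2, hc3, hac, hca, ⟨hap1, hap2⟩, hps⟩ := hI
  simp only [PendShape, Conf.stack, Conf.store, focusLocs, focusVal] at hc1 hc2 hc3 hac hca hps hap1 hap2 hfoc hfr hst
  have harg : FramePot B (.arg (t2, e2)) := hfr _ (List.mem_cons_self)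
  have hc2' : LocsIn σ (stackLocs (Frame.arg (t2, e2) :: s)) := hc2
  rw [stackLocs_cons] at hc2'
  obtain ⟨hc2a, hc2b⟩ := locsIn_append.1 hc2'
  constructor
  · refine ⟨⟨harg, ?_, hst⟩, hc2a, ?_, hc3, hac, ?_, ⟨?_, hap2⟩, ?_⟩
    · intro f hf
      rcases List.mem_cons.1 hf with rfl | hf
      · trivial
      · exact hfr f (List.mem_cons_of_mem _ hf)
    · show LocsIn σ (stackLocs (Frame.appL t :: s))
      rw [stackLocs_cons]
      exact locsIn_append.2 ⟨fun a ha => by simp only [frameLocs, List.mem_nil_iff] at ha, hc2b⟩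
    · have hpop : CachesOK σ (envLocs e2) s :=
        cachesOK_pop hca (fun a ha => ⟨a, Or.inr ha, rea_refl σ a⟩)
      exact cachesOK_push (fun ℓ h => Frame.noConfusion h) hpop
        (fun a ha => by
          rcases ha with ha | ha
          · exact ⟨a, ha, rea_refl σ a⟩
          · simp only [frameLocs, List.mem_nil_iff] at ha)
    · intro v hv; exact Option.noConfusion rfl (heq_of_eq hv)
    · intro ℓ x0 t0 e0 hσℓ hm
      simp only [Conf.stack, Conf.store, focusVal] at hσℓ hm ⊢
      rcases List.mem_cons.1 hm with hh | hm
      · exact Frame.noConfusion hh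
      · rcases hps ℓ x0 t0 e0 hσℓ (List.mem_cons_of_mem _ hm) with
          ⟨s₁, y, s₂, heq⟩ | ⟨t', s₂, heq, hfv⟩
        · cases s₁ with
          | nil =>
            injection heq with h1 _
            exact absurd h1 (by simp)
          | cons f s₁ =>
            injection heq with h1 h2
            exact Or.inl ⟨Frame.appL t :: s₁, y, s₂, by simp [h2]⟩
        · injection heq with h1 _
          exact absurd h1 (by simp)
  · have h1 : Φσ σ (Frame.appL t :: s) = Φσ σ s :=
      phiσ_noncache (fun ℓ h => Frame.noConfusion h) σ s
    have h2 : Φσ σ (Frame.arg (t2, e2) :: s) = Φσ σ s :=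
      phiσ_noncache (fun ℓ h => Frame.noConfusion h) σ s
    show Φt t2 + Φs (Frame.appL t :: s) + Φσ σ (Frame.appL t :: s) + 1 ≤
      Φv (.tm t) + Φs (Frame.arg (t2, e2) :: s) + Φσ σ (Frame.arg (t2, e2) :: s)
    rw [h1, h2, phis_cons, phis_cons]
    show Φt t2 + (1 + Φs s) + Φσ σ s + 1 ≤ 0 + (2 + Φt t2 + Φs s) + Φσ σ s
    omega

lemma inv_r10 {B : ℕ} {σ : Store} {t1 t2 : Tm Ident} {s : Stack}
    (hI : Inv B (.cont σ (.tm t2) (.appL t1 :: s))) :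
    Inv B (.cont σ (.tm (.app t1 t2)) s) ∧
    Φ (.cont σ (.tm (.app t1 t2)) s) + 1 ≤ Φ (.cont σ (.tm t2) (.appL t1 :: s)) := by
  obtain ⟨⟨hfoc, hfr, hst⟩, hc1, hc2, hc3, hac, hca, ⟨hap1, hap2⟩, hps⟩ := hI
  simp only [PendShape, Conf.stack, Conf.store, focusLocs, focusVal] at hc1 hc2 hc3 hac hca hps hap1 hap2 hfoc hfr hst
  have hc2' : LocsIn σ (stackLocs (Frame.appL t1 :: s)) := hc2
  rw [stackLocs_cons] at hc2'
  obtain ⟨_, hc2b⟩ := locsIn_append.1 hc2'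
  constructor
  · refine ⟨⟨trivial, ?_, hst⟩, ?_, hc2b, hc3, hac, ?_, ⟨?_, hap2⟩, ?_⟩
    · exact fun f hf => hfr f (List.mem_cons_of_mem _ hf)
    · intro a ha; simp only [focusLocs, vLocs, List.mem_nil_iff] at ha
    · exact cachesOK_pop hca (fun a ha => by simp only [focusLocs, vLocs, List.mem_nil_iff] at ha)
    · intro v' hv'
      obtain rfl : Value.tm (.app t1 t2) = v' := by injection hv'
      trivial
    · intro ℓ x0 t0 e0 hσℓ hm
      simp only [Conf.stack, Conf.store, focusVal] at hσℓ hm ⊢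
      rcases hps ℓ x0 t0 e0 hσℓ (List.mem_cons_of_mem _ hm) with
        ⟨s₁, y, s₂, heq⟩ | ⟨t', s₂, heq, hfv⟩
      · cases s₁ with
        | nil =>
          injection heq with h1 _
          exact absurd h1 (by simp)
        | cons f s₁ =>
          injection heq with h1 h2
          exact Or.inl ⟨s₁, y, s₂, h2⟩
      · injection heq with h1 _
        exact absurd h1 (by simp)
  · have h2 : Φσ σ (Frame.appL t1 :: s) = Φσ σ s :=
      phiσ_noncache (fun ℓ h => Frame.noConfusion h) σ s
    show Φv (.tm (.app t1 t2)) + Φs s + Φσ σ s + 1 ≤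
      Φv (.tm t2) + Φs (Frame.appL t1 :: s) + Φσ σ (Frame.appL t1 :: s)
    rw [h2, phis_cons]
    show 0 + Φs s + Φσ σ s + 1 ≤ 0 + (1 + Φs s) + Φσ σ s
    omega

lemma inv_r11 {B : ℕ} {σ : Store} {t : Tm Ident} {x : Ident} {s : Stack}
    (hI : Inv B (.cont σ (.tm t) (.lamF x :: s))) :
    Inv B (.cont σ (.tm (.lam x t)) s) ∧
    Φ (.cont σ (.tm (.lam x t)) s) + 1 ≤ Φ (.cont σ (.tm t) (.lamF x :: s)) := by
  obtain ⟨⟨hfoc, hfr, hst⟩, hc1, hc2, hc3, hac, hca, ⟨hap1, hap2⟩, hps⟩ := hI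
  simp only [PendShape, Conf.stack, Conf.store, focusLocs, focusVal] at hc1 hc2 hc3 hac hca hps hap1 hap2 hfoc hfr hst
  have hc2' : LocsIn σ (stackLocs (Frame.lamF x :: s)) := hc2
  rw [stackLocs_cons] at hc2'
  obtain ⟨_, hc2b⟩ := locsIn_append.1 hc2'
  constructor
  · refine ⟨⟨trivial, ?_, hst⟩, ?_, hc2b, hc3, hac, ?_, ⟨?_, hap2⟩, ?_⟩
    · exact fun f hf => hfr f (List.mem_cons_of_mem _ hf)
    · intro a ha; simp only [focusLocs, vLocs, List.mem_nil_iff] at ha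
    · exact cachesOK_pop hca (fun a ha => by simp only [focusLocs, vLocs, List.mem_nil_iff] at ha)
    · intro v' hv'
      obtain rfl : Value.tm (.lam x t) = v' := by injection hv'
      trivial
    · intro ℓ x0 t0 e0 hσℓ hm
      simp only [Conf.stack, Conf.store, focusVal] at hσℓ hm ⊢
      rcases hps ℓ x0 t0 e0 hσℓ (List.mem_cons_of_mem _ hm) with
        ⟨s₁, y, s₂, heq⟩ | ⟨t', s₂, heq, hfv⟩
      · cases s₁ with
        | nil =>
          injection heq with h1 h2
          exact Or.inr ⟨.lam x t, s₂, h2, rfl⟩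
        | cons f s₁ =>
          injection heq with h1 h2
          exact Or.inl ⟨s₁, y, s₂, h2⟩
      · injection heq with h1 _
        exact absurd h1 (by simp)
  · have h2 : Φσ σ (Frame.lamF x :: s) = Φσ σ s :=
      phiσ_noncache (fun ℓ h => Frame.noConfusion h) σ s
    show Φv (.tm (.lam x t)) + Φs s + Φσ σ s + 1 ≤
      Φv (.tm t) + Φs (Frame.lamF x :: s) + Φσ σ (Frame.lamF x :: s)
    rw [h2, phis_cons]
    show 0 + Φs s + Φσ σ s + 1 ≤ 0 + (1 + Φs s) + Φσ σ s
    omega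

end Aux4

section Aux5

lemma cachesOK_top_not_mem {σ : Store} {S : List Loc} {s : Stack} {ℓ : Loc}
    (h : CachesOK σ S (Frame.cache ℓ :: s)) : Frame.cache ℓ ∉ s := by
  intro hm
  obtain ⟨u, w, huw⟩ := List.append_of_mem hm
  obtain ⟨_, hno⟩ := h (Frame.cache ℓ :: u) ℓ w (by rw [huw]; rfl)
  exact hno ℓ (Or.inr (by
    rw [stackLocs_cons]
    exact List.mem_append_left _ (by simp [frameLocs]))) (rea_refl σ ℓ)

lemma cachesOK_src_not_mem {σ : Store} {S : List Loc} {s : Stack} {ℓ : Loc}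
    (h : CachesOK σ S s) (hS : ℓ ∈ S) : Frame.cache ℓ ∉ s := by
  intro hm
  obtain ⟨u, w, huw⟩ := List.append_of_mem hm
  exact (h u ℓ w huw).2 ℓ (Or.inl hS) (rea_refl σ ℓ)

lemma inv_r3 {B : ℕ} {x : Ident} {e e2 : Env} {s : Stack} {σ : Store} {ℓ : Loc} {t : Tm Ident}
    (he : lookupL e x = some ℓ) (hσ : lookupL σ ℓ = some (.todo (t, e2)))
    (hI : Inv B (.eval (.var x, e) s σ)) :
    Inv B (.eval (t, e2) (.cache ℓ :: s) σ) ∧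
    Φ (.eval (t, e2) (.cache ℓ :: s) σ) + 1 ≤ Φ (.eval (.var x, e) s σ) := by
  obtain ⟨⟨hfoc, hfr, hst⟩, hc1, hc2, hc3, hac, hca, ⟨hap1, hap2⟩, hps⟩ := hI
  simp only [PendShape, Conf.stack, Conf.store, focusLocs, focusVal] at hc1 hc2 hc3 hac hca hps hap1 hap2 hfoc hfr hst
  have hℓe : ℓ ∈ envLocs e := mem_envLocs_of_lookup he
  have hmem : (ℓ, Storable.todo (t, e2)) ∈ σ := lookup_mem hσ
  have hns : Frame.cache ℓ ∉ s := cachesOK_src_not_mem hca hℓe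
  constructor
  · refine ⟨⟨?_, ?_, hst⟩, ?_, ?_, hc3, hac, ?_, ⟨?_, hap2⟩, ?_⟩
    · exact hst _ hmem
    · intro f hf
      rcases List.mem_cons.1 hf with rfl | hf
      · trivial
      · exact hfr f hf
    · exact hc3 _ hmem
    · show LocsIn σ (stackLocs (Frame.cache ℓ :: s))
      rw [stackLocs_cons]
      refine locsIn_append.2 ⟨?_, hc2⟩
      intro a ha
      simp only [frameLocs, List.mem_singleton] at ha
      subst ha
      exact ⟨_, hσ⟩
    · -- CachesOK
      intro s₁ ℓc s₂ heq
      cases s₁ with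
      | nil =>
        injection heq with h1 h2
        obtain rfl : ℓ = ℓc := by injection h1
        refine ⟨Or.inr ⟨(t, e2), hσ⟩, fun a ha hrea => ?_⟩
        rcases ha with ha | ha
        · exact hac ℓ a ⟨_, hσ, ha⟩ hrea
        · simp [stackLocs] at ha
      | cons f s₁ =>
        injection heq with h1 h2
        obtain ⟨htp, hno⟩ := hca s₁ ℓc s₂ h2
        refine ⟨htp, fun a ha hrea => ?_⟩
        rcases ha with ha | ha
        · exact hno ℓ (Or.inl hℓe)
            (rea_trans (rea_of_edge ⟨_, hσ, ha⟩) hrea)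
        · rw [← h1, stackLocs_cons] at ha
          rcases List.mem_append.1 ha with ha | ha
          · have haℓ : a = ℓ := by simpa [frameLocs] using ha
            rw [haℓ] at hrea
            exact hno ℓ (Or.inl hℓe) hrea
          · exact hno a (Or.inr ha) hrea
    · intro v hv; exact Option.noConfusion rfl (heq_of_eq hv)
    · intro ℓ' x0 t0 e0 hσℓ hm
      simp only [Conf.stack, Conf.store, focusVal] at hσℓ hm ⊢
      rcases List.mem_cons.1 hm with hh | hm
      · obtain rfl : ℓ' = ℓ := by injection hh
        rw [hσ] at hσℓ
        exact Storable.noConfusion (by injection hσℓ)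
      · rcases hps ℓ' x0 t0 e0 hσℓ hm with ⟨s₁, y, s₂, heq⟩ | ⟨t', s₂, heq, hfv⟩
        · exact Or.inl ⟨Frame.cache ℓ :: s₁, y, s₂, by rw [heq]; rfl⟩
        · exact Option.noConfusion rfl (heq_of_eq hfv)
  · have hpush := phiσ_cache_push hns hσ
    have hw : svWt (Storable.todo (t, e2)) = Φt t := rfl
    rw [hw] at hpush
    show Φt t + Φs (Frame.cache ℓ :: s) + Φσ σ (Frame.cache ℓ :: s) + 1 ≤
      Φt (.var x) + Φs s + Φσ σ s
    rw [phis_cons]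
    show Φt t + (1 + Φs s) + Φσ σ (Frame.cache ℓ :: s) + 1 ≤ 2 + Φs s + Φσ σ s
    omega

lemma inv_r2 {B : ℕ} {x : Ident} {t : Tm Ident} {e : Env} {s : Stack} {σ : Store} {ℓ : Loc}
    (h : lookupL σ ℓ = none)
    (hI : Inv B (.eval (.lam x t, e) s σ)) :
    Inv B (.cont ((ℓ, .pend x t e) :: σ) (.abs x t e ℓ) s) ∧
    Φ (.cont ((ℓ, .pend x t e) :: σ) (.abs x t e ℓ) s) + 1 ≤ Φ (.eval (.lam x t, e) s σ) := by
  obtain ⟨⟨hfoc, hfr, hst⟩, hc1, hc2, hc3, hac, hca, ⟨hap1, hap2⟩, hps⟩ := hI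
  simp only [PendShape, Conf.stack, Conf.store, focusLocs, focusVal] at hc1 hc2 hc3 hac hca hps hap1 hap2 hfoc hfr hst
  have hlam : 4 + Φt t ≤ B := by simpa [FocusPot, Φt] using hfoc
  have hsv : LocsIn σ (svLocs (.pend x t e)) := hc1
  constructor
  · refine ⟨⟨?_, hfr, ?_⟩, ?_, ?_, ?_, ?_, ?_, ⟨?_, ?_⟩, ?_⟩
    · exact hlam
    · intro p hp
      rcases List.mem_cons.1 hp with rfl | hp
      · exact hlam
      · exact hst p hp
    · -- cl1
      intro a ha
      show ∃ sv, lookupL ((ℓ, Storable.pend x t e) :: σ) a = some sv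
      have ha' : a ∈ ℓ :: envLocs e := ha
      rcases List.mem_cons.1 ha' with rfl | ha2
      · exact ⟨_, by rw [lookupL_cons, if_pos rfl]⟩
      · exact locsIn_cons hc1 a ha2
    · exact locsIn_cons hc2
    · -- cl3
      intro p hp
      rcases List.mem_cons.1 hp with rfl | hp
      · exact locsIn_cons hc1
      · exact locsIn_cons (hc3 p hp)
    · exact acyc_cons hac hc3 h hsv
    · -- CachesOK
      refine cachesOK_consStore hca hc3 h hsv hc2 ?_ ?_
      · exact fun c hc => ⟨c, hc, rea_refl σ c⟩
      · intro a ha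
        rcases List.mem_cons.1 ha with rfl | ha
        · exact Or.inl rfl
        · exact Or.inr ⟨hc1 a ha, a, ha, rea_refl σ a⟩
    · -- ap focus
      intro v hv
      obtain rfl : Value.abs x t e ℓ = v := by injection hv
      show lookupL ((ℓ, Storable.pend x t e) :: σ) ℓ = some (.pend x t e) ∨
        ∃ t2, lookupL ((ℓ, Storable.pend x t e) :: σ) ℓ = some (.done (.tm t2))
      exact Or.inl (by rw [lookupL_cons, if_pos rfl])
    · -- ap store
      intro p hp v hv
      rcases List.mem_cons.1 hp with rfl | hp
      · exact Storable.noConfusion hv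
      · exact valAP_cons h (hap2 p hp v hv)
    · -- ps
      intro ℓ' x0 t0 e0 hσℓ hm
      simp only [Conf.stack, Conf.store, focusVal] at hσℓ hm ⊢
      have hne : ℓ' ≠ ℓ := isTP_ne_fresh (cachesOK_mem hca hm) h
      rw [lookupL_cons, if_neg hne] at hσℓ
      rcases hps ℓ' x0 t0 e0 hσℓ hm with ⟨s₁, y, s₂, heq⟩ | ⟨t', s₂, heq, hfv⟩
      · exact Or.inl ⟨s₁, y, s₂, heq⟩
      · exact Option.noConfusion rfl (heq_of_eq hfv)
  · have hle := phiσ_le_cons (ℓ, Storable.pend x t e) σ s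
    have hw : svWt (Storable.pend x t e) = 2 + Φt t := rfl
    rw [hw] at hle
    show Φv (.abs x t e ℓ) + Φs s + Φσ ((ℓ, Storable.pend x t e) :: σ) s + 1 ≤
      Φt (.lam x t) + Φs s + Φσ σ s
    show 1 + Φs s + Φσ ((ℓ, Storable.pend x t e) :: σ) s + 1 ≤ 4 + Φt t + Φs s + Φσ σ s
    omega

lemma inv_r8 {B : ℕ} {σ : Store} {x : Ident} {t : Tm Ident} {e : Env} {ℓ : Loc} {s : Stack} {v : Value}
    (hσ : lookupL σ ℓ = some (.done v))
    (hI : Inv B (.cont σ (.abs x t e ℓ) s)) :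
    Inv B (.cont σ v s) ∧ Φ (.cont σ v s) + 1 ≤ Φ (.cont σ (.abs x t e ℓ) s) := by
  obtain ⟨⟨hfoc, hfr, hst⟩, hc1, hc2, hc3, hac, hca, ⟨hap1, hap2⟩, hps⟩ := hI
  simp only [PendShape, Conf.stack, Conf.store, focusLocs, focusVal] at hc1 hc2 hc3 hac hca hps hap1 hap2 hfoc hfr hst
  have hap : ValAP σ (.abs x t e ℓ) := hap1 _ rfl
  obtain ⟨t', rfl⟩ : ∃ t', v = Value.tm t' := by
    rcases hap with hpend | ⟨t', hdone⟩
    · rw [hσ] at hpend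
      exact Storable.noConfusion (by injection hpend)
    · rw [hσ] at hdone
      have : Storable.done v = Storable.done (Value.tm t') := by injection hdone
      exact ⟨t', by injection this⟩
  constructor
  · refine ⟨⟨trivial, hfr, hst⟩, ?_, hc2, hc3, hac, ?_, ⟨?_, hap2⟩, ?_⟩
    · intro a ha; simp only [focusLocs, vLocs, List.mem_nil_iff] at ha
    · exact cachesOK_mono hca (fun a ha => by
        simp only [focusLocs, vLocs, List.mem_nil_iff] at ha)
    · intro v' hv'
      obtain rfl : Value.tm t' = v' := by injection hv'
      trivial
    · intro ℓ' x0 t0 e0 hσℓ hm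
      simp only [Conf.stack, Conf.store, focusVal] at hσℓ hm ⊢
      rcases hps ℓ' x0 t0 e0 hσℓ hm with ⟨s₁, y, s₂, heq⟩ | ⟨t'', s₂, heq, hfv⟩
      · exact Or.inl ⟨s₁, y, s₂, heq⟩
      · exact Value.noConfusion (by injection hfv)
  · show Φv (.tm t') + Φs s + Φσ σ s + 1 ≤ Φv (.abs x t e ℓ) + Φs s + Φσ σ s
    show 0 + Φs s + Φσ σ s + 1 ≤ 1 + Φs s + Φσ σ s
    omega

end Aux5

section Aux6

lemma valAP_upd {σ : Store} {ℓ : Loc} {v w : Value}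
    (htp : isTP σ ℓ)
    (hpend : ∀ x0 t0 e0, lookupL σ ℓ = some (.pend x0 t0 e0) → ∃ t', v = .tm t')
    (hw : ValAP σ w) : ValAP (updL σ ℓ (.done v)) w := by
  cases w with
  | tm _ => trivial
  | abs x t e ℓA =>
    have hw' : lookupL σ ℓA = some (.pend x t e) ∨
        ∃ t2, lookupL σ ℓA = some (.done (.tm t2)) := hw
    show lookupL (updL σ ℓ (.done v)) ℓA = some (.pend x t e) ∨
        ∃ t2, lookupL (updL σ ℓ (.done v)) ℓA = some (.done (.tm t2))
    by_cases hℓA : ℓA = ℓ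
    · subst hℓA
      rcases hw' with hp | ⟨t2, hd⟩
      · obtain ⟨t', rfl⟩ := hpend x t e hp
        exact Or.inr ⟨t', by rw [lookupL_updL, if_pos rfl, hp]; rfl⟩
      · exfalso
        rcases htp with ⟨x1, t1, e1, h1⟩ | ⟨c, h1⟩ <;>
          · rw [hd] at h1
            exact Storable.noConfusion (by injection h1)
    · rw [lookupL_updL, if_neg hℓA]
      exact hw'

lemma inv_r5 {B : ℕ} {σ : Store} {v : Value} {ℓ : Loc} {s : Stack}
    (hI : Inv B (.cont σ v (.cache ℓ :: s))) :
    Inv B (.cont (updL σ ℓ (.done v)) v s) ∧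
    Φ (.cont (updL σ ℓ (.done v)) v s) + 1 ≤ Φ (.cont σ v (.cache ℓ :: s)) := by
  obtain ⟨⟨hfoc, hfr, hst⟩, hc1, hc2, hc3, hac, hca, ⟨hap1, hap2⟩, hps⟩ := hI
  simp only [PendShape, Conf.stack, Conf.store, focusLocs, focusVal] at hc1 hc2 hc3 hac hca hps hap1 hap2 hfoc hfr hst
  obtain ⟨htpℓ, hnoℓ⟩ := hca [] ℓ s rfl
  have hnv : ∀ c ∈ vLocs v, ¬ Rea σ c ℓ := fun c hc => hnoℓ c (Or.inl hc)
  have hnotin : Frame.cache ℓ ∉ s := cachesOK_top_not_mem hca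
  have hpend : ∀ x0 t0 e0, lookupL σ ℓ = some (.pend x0 t0 e0) → ∃ t', v = .tm t' := by
    intro x0 t0 e0 hp
    rcases hps ℓ x0 t0 e0 hp (List.mem_cons_self) with ⟨s₁, y, s₂, heq⟩ | ⟨t', s₂, heq, hfv⟩
    · exfalso
      cases s₁ with
      | nil =>
        injection heq with h1 _
        exact Frame.noConfusion h1
      | cons f s₁ =>
        injection heq with h1 h2
        exact hnotin (by
          rw [h2]
          exact List.mem_append_right _ (List.mem_cons_of_mem _ (List.mem_cons_self)))
    · exact ⟨t', by injection hfv⟩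
  constructor
  · refine ⟨⟨hfoc, ?_, ?_⟩, locsIn_upd hc1, ?_, ?_, acyc_upd hac hnv, cachesOK_upd hca,
      ⟨?_, ?_⟩, ?_⟩
    · exact fun f hf => hfr f (List.mem_cons_of_mem _ hf)
    · -- store pot
      intro p hp
      have hp' : p ∈ updL σ ℓ (.done v) := hp
      obtain ⟨q, hq, hpq⟩ := List.mem_map.1 hp'
      by_cases hqℓ : q.1 = ℓ
      · rw [if_pos hqℓ] at hpq
        rw [← hpq]
        exact hfoc
      · rw [if_neg hqℓ] at hpq
        rw [← hpq]
        exact hst q hq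
    · -- cl2
      refine locsIn_upd (fun a ha => hc2 a ?_)
      rw [stackLocs_cons]
      exact List.mem_append_right _ ha
    · -- cl3
      intro p hp
      have hp' : p ∈ updL σ ℓ (.done v) := hp
      obtain ⟨q, hq, hpq⟩ := List.mem_map.1 hp'
      by_cases hqℓ : q.1 = ℓ
      · rw [if_pos hqℓ] at hpq
        rw [← hpq]
        exact locsIn_upd hc1
      · rw [if_neg hqℓ] at hpq
        rw [← hpq]
        exact locsIn_upd (hc3 q hq)
    · -- ap focus
      intro v' hv'
      obtain rfl : v = v' := by injection hv'
      exact valAP_upd htpℓ hpend (hap1 v rfl)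
    · -- ap store
      intro p hp v' hv'
      have hp' : p ∈ updL σ ℓ (.done v) := hp
      obtain ⟨q, hq, hpq⟩ := List.mem_map.1 hp'
      by_cases hqℓ : q.1 = ℓ
      · rw [if_pos hqℓ] at hpq
        rw [← hpq] at hv'
        obtain rfl : v = v' := by injection hv'
        exact valAP_upd htpℓ hpend (hap1 v rfl)
      · rw [if_neg hqℓ] at hpq
        rw [← hpq] at hv'
        exact valAP_upd htpℓ hpend (hap2 q hq v' hv')
    · -- ps
      intro ℓ' x0 t0 e0 hσℓ hm
      simp only [Conf.stack, Conf.store, focusVal] at hσℓ hm ⊢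
      have hne : ℓ' ≠ ℓ := by
        rintro rfl
        rcases hh : lookupL σ ℓ' with _ | sv0
        · rw [lookupL_updL, if_pos rfl, hh] at hσℓ
          exact Option.noConfusion rfl (heq_of_eq hσℓ)
        · rw [lookupL_updL, if_pos rfl, hh] at hσℓ
          exact Storable.noConfusion (by injection hσℓ)
      rw [lookupL_updL, if_neg hne] at hσℓ
      rcases hps ℓ' x0 t0 e0 hσℓ (List.mem_cons_of_mem _ hm) with
        ⟨s₁, y, s₂, heq⟩ | ⟨t', s₂, heq, hfv⟩
      · cases s₁ with
        | nil =>
          injection heq with h1 _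
          exact Frame.noConfusion h1
        | cons f s₁ =>
          injection heq with h1 h2
          exact Or.inl ⟨s₁, y, s₂, h2⟩
      · injection heq with h1 _
        exact absurd (by injection h1 : ℓ = ℓ') (Ne.symm hne)
  · show Φv v + Φs s + Φσ (updL σ ℓ (.done v)) s + 1 ≤
      Φv v + Φs (Frame.cache ℓ :: s) + Φσ σ (Frame.cache ℓ :: s)
    rw [phis_cons]
    have := phiσ_upd (σ := σ) (ℓ := ℓ) (v := v) (s := s)
    show Φv v + Φs s + Φσ (updL σ ℓ (.done v)) s + 1 ≤
      Φv v + (1 + Φs s) + Φσ σ (Frame.cache ℓ :: s)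
    omega

lemma inv_r6 {B : ℕ} {σ : Store} {x : Ident} {t t2 : Tm Ident} {e e2 : Env}
    {ℓA ℓ2 : Loc} {s : Stack}
    (h2 : lookupL σ ℓ2 = none)
    (hI : Inv B (.cont σ (.abs x t e ℓA) (.arg (t2, e2) :: s))) :
    Inv B (.eval (t, (x, ℓ2) :: e) s ((ℓ2, .todo (t2, e2)) :: σ)) ∧
    Φ (.eval (t, (x, ℓ2) :: e) s ((ℓ2, .todo (t2, e2)) :: σ)) + 1 ≤
      Φ (.cont σ (.abs x t e ℓA) (.arg (t2, e2) :: s)) + B := by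
  obtain ⟨⟨hfoc, hfr, hst⟩, hc1, hc2, hc3, hac, hca, ⟨hap1, hap2⟩, hps⟩ := hI
  simp only [PendShape, Conf.stack, Conf.store, focusLocs, focusVal] at hc1 hc2 hc3 hac hca hps hap1 hap2 hfoc hfr hst
  have habs : 4 + Φt t ≤ B := hfoc
  have hargpot : Φt t2 ≤ B := hfr _ (List.mem_cons_self)
  have hc2' : LocsIn σ (stackLocs (Frame.arg (t2, e2) :: s)) := hc2
  rw [stackLocs_cons] at hc2'
  obtain ⟨hc2a, hc2b⟩ := locsIn_append.1 hc2'
  have hc1e : LocsIn σ (envLocs e) := fun a ha => hc1 a (List.mem_cons_of_mem _ ha)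
  have hbase : CachesOK σ (vLocs (.abs x t e ℓA) ++ envLocs e2) s :=
    cachesOK_pop hca (fun a ha => by
      rcases List.mem_append.1 ha with ha | ha
      · exact ⟨a, Or.inl ha, rea_refl σ a⟩
      · exact ⟨a, Or.inr ha, rea_refl σ a⟩)
  constructor
  · refine ⟨⟨?_, ?_, ?_⟩, ?_, locsIn_cons hc2b, ?_, acyc_cons hac hc3 h2 hc2a, ?_,
      ⟨fun v hv => Option.noConfusion rfl (heq_of_eq hv), ?_⟩, ?_⟩
    · show Φt t ≤ B; omega
    · exact fun f hf => hfr f (List.mem_cons_of_mem _ hf)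
    · intro p hp
      have hp' : p ∈ (ℓ2, Storable.todo (t2, e2)) :: σ := hp
      rcases List.mem_cons.1 hp' with rfl | hp2
      · exact hargpot
      · exact hst p hp2
    · -- cl1
      intro a ha
      show ∃ sv, lookupL ((ℓ2, Storable.todo (t2, e2)) :: σ) a = some sv
      have ha' : a ∈ ℓ2 :: envLocs e := ha
      rcases List.mem_cons.1 ha' with rfl | ha2
      · exact ⟨_, by rw [lookupL_cons, if_pos rfl]⟩
      · exact locsIn_cons hc1e a ha2
    · -- cl3
      intro p hp
      have hp' : p ∈ (ℓ2, Storable.todo (t2, e2)) :: σ := hp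
      rcases List.mem_cons.1 hp' with rfl | hp2
      · exact locsIn_cons hc2a
      · exact locsIn_cons (hc3 p hp2)
    · -- caches
      refine cachesOK_consStore hbase hc3 h2 hc2a hc2b ?_ ?_
      · exact fun c hc => ⟨c, List.mem_append_right _ hc, rea_refl σ c⟩
      · intro a ha
        have ha' : a ∈ ℓ2 :: envLocs e := ha
        rcases List.mem_cons.1 ha' with rfl | ha2
        · exact Or.inl rfl
        · exact Or.inr ⟨hc1e a ha2,
            a, List.mem_append_left _ (List.mem_cons_of_mem _ ha2), rea_refl σ a⟩
    · -- ap store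
      intro p hp v hv
      have hp' : p ∈ (ℓ2, Storable.todo (t2, e2)) :: σ := hp
      rcases List.mem_cons.1 hp' with rfl | hp2
      · exact Storable.noConfusion hv
      · exact valAP_cons h2 (hap2 p hp2 v hv)
    · -- ps
      intro ℓp xp tp ep hσp hm
      simp only [Conf.stack, Conf.store, focusVal] at hσp hm ⊢
      have hne : ℓp ≠ ℓ2 := by
        rintro rfl
        rw [lookupL_cons, if_pos rfl] at hσp
        exact Storable.noConfusion (by injection hσp)
      rw [lookupL_cons, if_neg hne] at hσp
      rcases hps ℓp xp tp ep hσp (List.mem_cons_of_mem _ hm) with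
        ⟨s₁, y, s₂, heq⟩ | ⟨t', s₂, heq, hfv⟩
      · cases s₁ with
        | nil =>
          injection heq with h1 _
          exact absurd h1 (by simp)
        | cons f s₁ =>
          injection heq with h1 hq2
          exact Or.inl ⟨s₁, y, s₂, hq2⟩
      · injection heq with h1 _
        exact absurd h1 (by simp)
  · have harg0 : Φσ σ (Frame.arg (t2, e2) :: s) = Φσ σ s :=
      phiσ_noncache (fun ℓ h => Frame.noConfusion h) σ s
    have hcons := phiσ_le_cons (ℓ2, Storable.todo (t2, e2)) σ s
    have hw : svWt (Storable.todo (t2, e2)) = Φt t2 := rfl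
    rw [hw] at hcons
    show Φt t + Φs s + Φσ ((ℓ2, Storable.todo (t2, e2)) :: σ) s + 1 ≤
      Φv (.abs x t e ℓA) + Φs (Frame.arg (t2, e2) :: s) + Φσ σ (Frame.arg (t2, e2) :: s) + B
    rw [harg0, phis_cons]
    show Φt t + Φs s + Φσ ((ℓ2, Storable.todo (t2, e2)) :: σ) s + 1 ≤
      1 + (2 + Φt t2 + Φs s) + Φσ σ s + B
    omega

lemma inv_r7 {B : ℕ} {σ : Store} {x x' x0 : Ident} {t t0 : Tm Ident} {e e0 : Env}
    {ℓ ℓ2 : Loc} {s : Stack}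
    (hσ : lookupL σ ℓ = some (.pend x0 t0 e0))
    (hℓ2 : lookupL σ ℓ2 = none)
    (hI : Inv B (.cont σ (.abs x t e ℓ) s)) :
    Inv B (.eval (t, (x, ℓ2) :: e) (.lamF x' :: .cache ℓ :: s)
      ((ℓ2, .done (.tm (.var x'))) :: σ)) ∧
    Φ (.eval (t, (x, ℓ2) :: e) (.lamF x' :: .cache ℓ :: s)
      ((ℓ2, .done (.tm (.var x'))) :: σ)) + 1 ≤ Φ (.cont σ (.abs x t e ℓ) s) := by
  obtain ⟨⟨hfoc, hfr, hst⟩, hc1, hc2, hc3, hac, hca, ⟨hap1, hap2⟩, hps⟩ := hI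
  simp only [PendShape, Conf.stack, Conf.store, focusLocs, focusVal] at hc1 hc2 hc3 hac hca hps hap1 hap2 hfoc hfr hst
  have hap : ValAP σ (.abs x t e ℓ) := hap1 _ rfl
  have hσ' : lookupL σ ℓ = some (.pend x t e) := by
    rcases hap with hp | ⟨t2, hd⟩
    · exact hp
    · exfalso; rw [hσ] at hd; exact Storable.noConfusion (by injection hd)
  have hnotin : Frame.cache ℓ ∉ s :=
    cachesOK_src_not_mem hca (List.mem_cons_self)
  have hℓkey : ℓ ≠ ℓ2 := by
    rintro rfl; rw [hℓ2] at hσ; exact Option.noConfusion rfl (heq_of_eq hσ)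
  have hc1e : LocsIn σ (envLocs e) := fun a ha => hc1 a (List.mem_cons_of_mem _ ha)
  have hsvnil : LocsIn σ (svLocs (Storable.done (.tm (.var x')))) := by
    intro a ha; simp [svLocs, vLocs] at ha
  have hkey : ∀ b, (∃ sv, lookupL σ b = some sv) →
      ∀ c, Rea ((ℓ2, Storable.done (.tm (.var x'))) :: σ) b c → Rea σ b c := by
    intro b ⟨sv, hsv⟩ c hr
    refine rea_cons_old hc3 hℓ2 hr ?_
    rintro rfl; rw [hℓ2] at hsv; exact Option.noConfusion rfl (heq_of_eq hsv)
  constructor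
  · refine ⟨⟨?_, ?_, ?_⟩, ?_, ?_, ?_, acyc_cons hac hc3 hℓ2 hsvnil, ?_,
      ⟨fun v hv => Option.noConfusion rfl (heq_of_eq hv), ?_⟩, ?_⟩
    · show Φt t ≤ B
      have : 4 + Φt t ≤ B := hfoc
      omega
    · intro f hf
      have hf' : f ∈ Frame.lamF x' :: Frame.cache ℓ :: s := hf
      rcases List.mem_cons.1 hf' with rfl | hf2
      · trivial
      · rcases List.mem_cons.1 hf2 with rfl | hf3
        · trivial
        · exact hfr f hf3
    · intro p hp
      have hp' : p ∈ (ℓ2, Storable.done (.tm (.var x'))) :: σ := hp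
      rcases List.mem_cons.1 hp' with rfl | hp2
      · trivial
      · exact hst p hp2
    · -- cl1
      intro a ha
      show ∃ sv, lookupL ((ℓ2, Storable.done (.tm (.var x'))) :: σ) a = some sv
      have ha' : a ∈ ℓ2 :: envLocs e := ha
      rcases List.mem_cons.1 ha' with rfl | ha2
      · exact ⟨_, by rw [lookupL_cons, if_pos rfl]⟩
      · exact locsIn_cons hc1e a ha2
    · -- cl2
      intro a ha
      show ∃ sv, lookupL ((ℓ2, Storable.done (.tm (.var x'))) :: σ) a = some sv
      have ha' : a ∈ stackLocs (Frame.lamF x' :: Frame.cache ℓ :: s) := ha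
      rw [stackLocs_cons, stackLocs_cons] at ha'
      simp only [frameLocs, List.nil_append] at ha'
      rcases List.mem_append.1 ha' with ha2 | ha2
      · have haℓ : a = ℓ := by simpa using ha2
        subst haℓ
        exact ⟨_, by rw [lookupL_cons, if_neg hℓkey]; exact hσ'⟩
      · exact locsIn_cons hc2 a ha2
    · -- cl3
      intro p hp
      have hp' : p ∈ (ℓ2, Storable.done (.tm (.var x'))) :: σ := hp
      rcases List.mem_cons.1 hp' with rfl | hp2
      · exact locsIn_cons hsvnil
      · exact locsIn_cons (hc3 p hp2)
    · -- caches
      intro s₁ ℓc s₂ heq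
      have heq' : Frame.lamF x' :: Frame.cache ℓ :: s = s₁ ++ Frame.cache ℓc :: s₂ := heq
      cases s₁ with
      | nil =>
        injection heq' with h1 _
        exact absurd h1 (by simp)
      | cons f s₁' =>
        injection heq' with hf heq2
        cases s₁' with
        | nil =>
          injection heq2 with hh1 hh2
          obtain rfl : ℓ = ℓc := by injection hh1
          refine ⟨Or.inl ⟨x, t, e, show lookupL ((ℓ2, Storable.done (.tm (.var x'))) :: σ) ℓ =
              some (.pend x t e) from by rw [lookupL_cons, if_neg hℓkey]; exact hσ'⟩, ?_⟩
          intro a ha hrea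
          rcases ha with ha | ha
          · have ha' : a ∈ ℓ2 :: envLocs e := ha
            rcases List.mem_cons.1 ha' with ha1 | ha2
            · rw [ha1] at hrea
              rcases rea_cons_new hc3 hℓ2 hsvnil hrea with hq1 | ⟨c, hcm, _⟩
              · exact hℓkey hq1
              · simp [svLocs, vLocs] at hcm
            · exact hac ℓ a ⟨_, hσ', ha2⟩ (hkey a (hc1e a ha2) ℓ hrea)
          · rw [← hf] at ha
            simp [stackLocs, frameLocs] at ha
        | cons f' s₁'' =>
          injection heq2 with hf' heq3
          have heq3' : s = s₁'' ++ Frame.cache ℓc :: s₂ := heq3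
          obtain ⟨htp, hno⟩ := hca s₁'' ℓc s₂ heq3'
          have hℓcne : ℓc ≠ ℓ2 := isTP_ne_fresh htp hℓ2
          refine ⟨isTP_cons htp hℓcne, ?_⟩
          intro a ha hrea
          rcases ha with ha | ha
          · have ha' : a ∈ ℓ2 :: envLocs e := ha
            rcases List.mem_cons.1 ha' with ha1 | ha2
            · rw [ha1] at hrea
              rcases rea_cons_new hc3 hℓ2 hsvnil hrea with hq1 | ⟨c, hcm, _⟩
              · exact hℓcne hq1
              · simp [svLocs, vLocs] at hcm
            · exact hno a (Or.inl (List.mem_cons_of_mem _ ha2)) (hkey a (hc1e a ha2) ℓc hrea)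
          · rw [← hf, ← hf'] at ha
            rw [stackLocs_cons, stackLocs_cons] at ha
            simp only [frameLocs, List.nil_append] at ha
            rcases List.mem_append.1 ha with ha2 | ha2
            · have haℓ : a = ℓ := by simpa using ha2
              rw [haℓ] at hrea
              exact hno ℓ (Or.inl (List.mem_cons_self)) (hkey ℓ ⟨_, hσ'⟩ ℓc hrea)
            · have hakey : ∃ sv, lookupL σ a = some sv :=
                hc2 a (by rw [heq3', stackLocs_append]; exact List.mem_append_left _ ha2)
              exact hno a (Or.inr ha2) (hkey a hakey ℓc hrea)
    · -- ap store
      intro p hp v hv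
      have hp' : p ∈ (ℓ2, Storable.done (.tm (.var x'))) :: σ := hp
      rcases List.mem_cons.1 hp' with rfl | hp2
      · obtain rfl : Value.tm (.var x') = v := by injection hv
        trivial
      · exact valAP_cons hℓ2 (hap2 p hp2 v hv)
    · -- ps
      intro ℓp xp tp ep hσp hm
      simp only [Conf.stack, Conf.store, focusVal] at hσp hm ⊢
      have hne : ℓp ≠ ℓ2 := by
        rintro rfl
        rw [lookupL_cons, if_pos rfl] at hσp
        exact Storable.noConfusion (by injection hσp)
      rw [lookupL_cons, if_neg hne] at hσp
      have hm' : Frame.cache ℓp ∈ Frame.lamF x' :: Frame.cache ℓ :: s := hm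
      rcases List.mem_cons.1 hm' with hh | hm2
      · exact absurd hh (by simp)
      · rcases List.mem_cons.1 hm2 with hh | hm3
        · obtain rfl : ℓp = ℓ := by injection hh
          exact Or.inl ⟨[], x', s, rfl⟩
        · rcases hps ℓp xp tp ep hσp hm3 with ⟨s₁, y, s₂, heq⟩ | ⟨t', s₂, heq, hfv⟩
          · exact Or.inl ⟨Frame.lamF x' :: Frame.cache ℓ :: s₁, y, s₂, by rw [heq]; rfl⟩
          · exact Value.noConfusion (by injection hfv)
  · -- potential
    have hpush := phiσ_cache_push hnotin hσ'
    have hw : svWt (Storable.pend x t e) = 2 + Φt t := rfl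
    rw [hw] at hpush
    have hlamq : Φσ σ (Frame.lamF x' :: Frame.cache ℓ :: s) = Φσ σ (Frame.cache ℓ :: s) :=
      phiσ_noncache (fun ℓ' h => Frame.noConfusion h) σ _
    have hent : Φσentry (Frame.lamF x' :: Frame.cache ℓ :: s)
        (ℓ2, Storable.done (.tm (.var x'))) ≤ 0 := phiσentry_le_svWt _ _
    show Φt t + Φs (Frame.lamF x' :: Frame.cache ℓ :: s) +
        Φσ ((ℓ2, Storable.done (.tm (.var x'))) :: σ) (Frame.lamF x' :: Frame.cache ℓ :: s) + 1 ≤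
      Φv (.abs x t e ℓ) + Φs s + Φσ σ s
    rw [phiσ_cons, hlamq, phis_cons, phis_cons]
    show Φt t + (1 + (1 + Φs s)) + (_ + Φσ σ (Frame.cache ℓ :: s)) + 1 ≤ 1 + Φs s + Φσ σ s
    omega

end Aux6

section Aux7

lemma step_inv {B r : ℕ} {k k' : Conf} (hs : Step r k k') (hI : Inv B k) :
    Inv B k' ∧ Φ k' + 1 ≤ Φ k + (if r = 6 then B else 0) := by
  cases hs with
  | r1 =>
    obtain ⟨h1, h2⟩ := inv_r1 hI
    exact ⟨h1, by simp only [if_neg (by norm_num : (1 : ℕ) ≠ 6)]; omega⟩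
  | r2 h =>
    obtain ⟨h1, h2⟩ := inv_r2 h hI
    exact ⟨h1, by simp only [if_neg (by norm_num : (2 : ℕ) ≠ 6)]; omega⟩
  | r3 he hσ =>
    obtain ⟨h1, h2⟩ := inv_r3 he hσ hI
    exact ⟨h1, by simp only [if_neg (by norm_num : (3 : ℕ) ≠ 6)]; omega⟩
  | r4done he hσ =>
    obtain ⟨h1, h2⟩ := inv_r4done he hσ hI
    exact ⟨h1, by simp only [if_neg (by norm_num : (4 : ℕ) ≠ 6)]; omega⟩
  | r4free he =>
    obtain ⟨h1, h2⟩ := inv_r4free hI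
    exact ⟨h1, by simp only [if_neg (by norm_num : (4 : ℕ) ≠ 6)]; omega⟩
  | r5 =>
    obtain ⟨h1, h2⟩ := inv_r5 hI
    exact ⟨h1, by simp only [if_neg (by norm_num : (5 : ℕ) ≠ 6)]; omega⟩
  | r6 h =>
    obtain ⟨h1, h2⟩ := inv_r6 h hI
    exact ⟨h1, by rw [if_pos rfl]; omega⟩
  | r7 hσ hs1 hs2 hℓ2 hx' =>
    obtain ⟨h1, h2⟩ := inv_r7 hσ hℓ2 hI
    exact ⟨h1, by simp only [if_neg (by norm_num : (7 : ℕ) ≠ 6)]; omega⟩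
  | r8 hσ hs1 hs2 =>
    obtain ⟨h1, h2⟩ := inv_r8 hσ hI
    exact ⟨h1, by simp only [if_neg (by norm_num : (8 : ℕ) ≠ 6)]; omega⟩
  | r9 =>
    obtain ⟨h1, h2⟩ := inv_r9 hI
    exact ⟨h1, by simp only [if_neg (by norm_num : (9 : ℕ) ≠ 6)]; omega⟩
  | r10 =>
    obtain ⟨h1, h2⟩ := inv_r10 hI
    exact ⟨h1, by simp only [if_neg (by norm_num : (10 : ℕ) ≠ 6)]; omega⟩
  | r11 =>
    obtain ⟨h1, h2⟩ := inv_r11 hI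
    exact ⟨h1, by simp only [if_neg (by norm_num : (11 : ℕ) ≠ 6)]; omega⟩

lemma run_bound {B : ℕ} :
    ∀ {k : Conf} {n b : ℕ} {k' : Conf}, Run k n b k' → Inv B k →
      n + Φ k' ≤ Φ k + b * B := by
  intro k n b k' h
  induction h with
  | refl k => intro _; simp
  | stepBeta hstep hrun ih =>
    intro hI
    obtain ⟨hI', hφ⟩ := step_inv hstep hI
    rw [if_pos rfl] at hφ
    have h2 := ih hI'
    rename_i k0 k1 k2 n0 b0
    have hmul : (b0 + 1) * B = b0 * B + B := by ring
    omega
  | stepOther hne hstep hrun ih =>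
    intro hI
    obtain ⟨hI', hφ⟩ := step_inv hstep hI
    rw [if_neg hne] at hφ
    have h2 := ih hI'
    omega

lemma inv_init (t0 : Tm Ident) : Inv (Φt t0) (Conf.init t0) := by
  refine ⟨⟨le_rfl, ?_, ?_⟩, ?_, ?_, ?_, ?_, ?_, ⟨?_, ?_⟩, ?_⟩
  · intro f hf; exact absurd hf (List.not_mem_nil)
  · intro p hp; exact absurd hp (List.not_mem_nil)
  · intro a ha; exact absurd ha (List.not_mem_nil)
  · intro a ha; exact absurd ha (List.not_mem_nil)
  · intro p hp; exact absurd hp (List.not_mem_nil)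
  · rintro a b ⟨sv, hsv, _⟩ _
    exact Option.noConfusion rfl (heq_of_eq hsv)
  · intro s₁ ℓc s₂ heq
    cases s₁ <;> exact List.noConfusion rfl (heq_of_eq heq)
  · intro v hv; exact Option.noConfusion rfl (heq_of_eq hv)
  · intro p hp; exact absurd hp (List.not_mem_nil)
  · intro ℓ x0 t0 e0 hσℓ _
    exact Option.noConfusion rfl (heq_of_eq hσℓ)

end Aux7

/-- Bilinearity of RKNL: the number of steps of any execution starting from the
initial term `t0` is at most `(|ρ|_β + 1) · Φt t0`. -/
theorem rknl_bilinear {t0 : Tm Ident} {n b : ℕ} {k' : Conf}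
    (h : Run (Conf.init t0) n b k') : n ≤ (b + 1) * Φt t0 := by
  have hb := run_bound h (inv_init t0)
  have hΦ : Φ (Conf.init t0) = Φt t0 := by
    show Φt t0 + Φs [] + Φσ [] [] = Φt t0
    rfl
  rw [hΦ] at hb
  have hmul : (b + 1) * Φt t0 = b * Φt t0 + Φt t0 := by ring
  omega

end RKNL
end
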